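/- arXiv:1907.04303 — 5 statements merged into one kernel-verified Lean document; each statement's English description precedes it below -/
import Mathlib

section
/- With the integral representation ₀F₁(n/2, D²/4) = ∫_{V_{n,p}} etr(D M̃ᵀ X) dμ(X) over the Stiefel manifold V_{n,p} (n ≥ p), for every δ > 0 there exists a constant K_{n,p,δ} > 0, depending only on n, p, δ, such that for all diagonal D with positive diagonal entries d₁,…,d_p: ₀F₁(n/2, D²/4) > K_{n,p,δ} · exp((1−δ)(d₁+⋯+d_p)). -/
open Matrix MeasureTheory

/-- Borel (product) σ-algebra on real matrices. -/
instance matrixMeasurableSpace {n p : ℕ} : MeasurableSpace (Matrix (Fin n) (Fin p) ℝ) :=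
  inferInstanceAs (MeasurableSpace (Fin n → Fin p → ℝ))

open ENNReal

instance matrixBorelSpace {n p : ℕ} :
    BorelSpace (Matrix (Fin n) (Fin p) ℝ) :=
  inferInstanceAs (BorelSpace (Fin n → Fin p → ℝ))

instance matrixOpensMeasurableSpace {n p : ℕ} :
    OpensMeasurableSpace (Matrix (Fin n) (Fin p) ℝ) :=
  inferInstanceAs (OpensMeasurableSpace (Fin n → Fin p → ℝ))

lemma exists_orth_ext {n p : ℕ} (hnp : p ≤ n) (Y : Matrix (Fin n) (Fin p) ℝ)
    (hY : Yᵀ * Y = 1) :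
    ∃ Q : Matrix (Fin n) (Fin n) ℝ, Qᵀ * Q = 1 ∧ ∀ i j, Q i (Fin.castLE hnp j) = Y i j := by
  classical
  let w : Fin n → EuclideanSpace ℝ (Fin n) := fun i =>
    if h : (i : ℕ) < p then (WithLp.toLp 2 (fun k => Y k ⟨i, h⟩) : EuclideanSpace ℝ (Fin n)) else 0
  have hw : Orthonormal ℝ (Set.restrict {i : Fin n | (i : ℕ) < p} w) := by
    rw [orthonormal_iff_ite]
    rintro ⟨i, hi⟩ ⟨j, hj⟩
    have hi' : (i : ℕ) < p := hi
    have hj' : (j : ℕ) < p := hj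
    have h1 : (Yᵀ * Y) ⟨i, hi'⟩ ⟨j, hj'⟩ = (1 : Matrix (Fin p) (Fin p) ℝ) ⟨i, hi'⟩ ⟨j, hj'⟩ := by
      rw [hY]
    simp only [Matrix.mul_apply, Matrix.transpose_apply, Matrix.one_apply] at h1
    show (inner ℝ (w i) (w j) : ℝ) = _
    simp only [w, dif_pos hi', dif_pos hj']
    rw [PiLp.inner_apply]
    simp only [RCLike.inner_apply, conj_trivial]
    rw [Finset.sum_congr rfl (fun x _ => mul_comm (Y x _) (Y x _)), h1]
    simp [Fin.ext_iff, Subtype.ext_iff]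
  obtain ⟨b, hb⟩ := hw.exists_orthonormalBasis_extension_of_card_eq (by simp)
  refine ⟨fun i k => b k i, ?_, ?_⟩
  · ext k l
    have h2 := orthonormal_iff_ite.mp b.orthonormal k l
    rw [PiLp.inner_apply] at h2
    simp only [RCLike.inner_apply, conj_trivial] at h2
    simp only [Matrix.mul_apply, Matrix.transpose_apply, Matrix.one_apply]
    change ∑ x, (b k).ofLp x * (b l).ofLp x = _
    simpa [mul_comm] using h2
  · intro i j
    have hmem : ((Fin.castLE hnp j : Fin n) : ℕ) < p := j.isLt
    have h3 := congrArg (fun v : EuclideanSpace ℝ (Fin n) => v i) (hb (Fin.castLE hnp j) hmem)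
    simpa [w, dif_pos hmem] using h3

lemma A_open {n p : ℕ} (hnp : p ≤ n) (ε : ℝ) :
    IsOpen {X : Matrix (Fin n) (Fin p) ℝ | ∀ j, 1 - ε < X (Fin.castLE hnp j) j} := by
  have : {X : Matrix (Fin n) (Fin p) ℝ | ∀ j, 1 - ε < X (Fin.castLE hnp j) j}
      = ⋂ j : Fin p, (fun X : Matrix (Fin n) (Fin p) ℝ => X (Fin.castLE hnp j) j) ⁻¹' Set.Ioi (1 - ε) := by
    ext X; simp [Set.mem_iInter]
  rw [this]
  exact isOpen_iInter_of_finite fun j =>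
    ((continuous_apply j).comp (continuous_apply (Fin.castLE hnp j))).isOpen_preimage _ isOpen_Ioi

lemma S_compact {n p : ℕ} :
    IsCompact {X : Matrix (Fin n) (Fin p) ℝ | Xᵀ * X = 1} := by
  have hclosed : IsClosed {X : Matrix (Fin n) (Fin p) ℝ | Xᵀ * X = 1} := by
    have hc : Continuous fun X : Matrix (Fin n) (Fin p) ℝ => Xᵀ * X :=
      (continuous_id.matrix_transpose).matrix_mul continuous_id
    exact isClosed_eq hc continuous_const
  have hsub : {X : Matrix (Fin n) (Fin p) ℝ | Xᵀ * X = 1} ⊆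
      Set.pi Set.univ (fun _ : Fin n => Set.pi Set.univ (fun _ : Fin p => Set.Icc (-1 : ℝ) 1)) := by
    intro X hX
    intro i _ j _
    have h1 : (Xᵀ * X) j j = 1 := by rw [hX]; simp [Matrix.one_apply]
    simp only [Matrix.mul_apply, Matrix.transpose_apply] at h1
    have hle : (X i j) ^ 2 ≤ 1 := by
      rw [← h1]
      have := Finset.single_le_sum (f := fun k => X k j * X k j)
        (fun k _ => mul_self_nonneg _) (Finset.mem_univ i)
      simpa [sq] using this
    constructor
    · nlinarith [hle]
    · nlinarith [hle]
  exact (isCompact_univ_pi fun _ => isCompact_univ_pi fun _ => isCompact_Icc).of_isClosed_subset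
    hclosed hsub

lemma entry_le_one {n p : ℕ} (X : Matrix (Fin n) (Fin p) ℝ) (hX : Xᵀ * X = 1)
    (i : Fin n) (j : Fin p) : X i j ≤ 1 := by
  have h1 : (Xᵀ * X) j j = 1 := by rw [hX]; simp [Matrix.one_apply]
  simp only [Matrix.mul_apply, Matrix.transpose_apply] at h1
  have hle : (X i j) ^ 2 ≤ 1 := by
    rw [← h1]
    have := Finset.single_le_sum (f := fun k => X k j * X k j)
      (fun k _ => mul_self_nonneg _) (Finset.mem_univ i)
    simpa [sq] using this
  nlinarith [hle]

lemma A_pos {n p : ℕ} (hnp : p ≤ n) (μ : Measure (Matrix (Fin n) (Fin p) ℝ))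
    (hprob : IsProbabilityMeasure μ)
    (hsupp : μ {X : Matrix (Fin n) (Fin p) ℝ | Xᵀ * X = 1} = 1)
    (hinv : ∀ Q : Matrix (Fin n) (Fin n) ℝ, Qᵀ * Q = 1 →
      Measure.map (fun X => Q * X) μ = μ)
    (ε : ℝ) (hε : 0 < ε) :
    0 < μ {X : Matrix (Fin n) (Fin p) ℝ | ∀ j, 1 - ε < X (Fin.castLE hnp j) j} := by
  classical
  set A := {X : Matrix (Fin n) (Fin p) ℝ | ∀ j, 1 - ε < X (Fin.castLE hnp j) j} with hA
  set S := {X : Matrix (Fin n) (Fin p) ℝ | Xᵀ * X = 1} with hS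
  -- choose orthogonal extension for each Y ∈ S
  have hQ : ∀ Y ∈ S, ∃ Q : Matrix (Fin n) (Fin n) ℝ,
      Qᵀ * Q = 1 ∧ ∀ i j, Q i (Fin.castLE hnp j) = Y i j :=
    fun Y hY => exists_orth_ext hnp Y hY
  choose! Q hQorth hQcol using hQ
  -- the sets U Y
  set U : Matrix (Fin n) (Fin p) ℝ → Set (Matrix (Fin n) (Fin p) ℝ) :=
    fun Y => (fun X => (Q Y)ᵀ * X) ⁻¹' A with hU
  have hcontm : ∀ M : Matrix (Fin n) (Fin n) ℝ,
      Continuous fun X : Matrix (Fin n) (Fin p) ℝ => M * X :=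
    fun M => continuous_const.matrix_mul continuous_id
  have hUopen : ∀ Y, IsOpen (U Y) := fun Y => (A_open hnp ε).preimage (hcontm _)
  have hmemU : ∀ Y ∈ S, Y ∈ U Y := by
    intro Y hY
    intro j
    show 1 - ε < ((Q Y)ᵀ * Y) (Fin.castLE hnp j) j
    have h1 : ((Q Y)ᵀ * Y) (Fin.castLE hnp j) j = (Yᵀ * Y) j j := by
      simp only [Matrix.mul_apply, Matrix.transpose_apply]
      congr 1
      ext k
      rw [hQcol Y hY k j]
    rw [h1, hY]
    simp [Matrix.one_apply]
    linarith
  have hmeasA : MeasurableSet A := (A_open hnp ε).measurableSet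
  have hUmeas : ∀ Y ∈ S, μ (U Y) = μ A := by
    intro Y hY
    have horth : ((Q Y)ᵀ)ᵀ * (Q Y)ᵀ = 1 := by
      rw [Matrix.transpose_transpose]
      exact mul_eq_one_comm.mp (hQorth Y hY)
    have := hinv ((Q Y)ᵀ) horth
    calc μ (U Y) = Measure.map (fun X => (Q Y)ᵀ * X) μ A := by
          rw [Measure.map_apply (hcontm _).measurable hmeasA]
      _ = μ A := by rw [this]
  -- covering
  have hcover : S ⊆ ⋃ Y : S, U Y := by
    intro X hX
    exact Set.mem_iUnion.mpr ⟨⟨X, hX⟩, hmemU X hX⟩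
  obtain ⟨t, ht⟩ := S_compact.elim_finite_subcover (fun Y : S => U Y)
    (fun Y => hUopen Y) hcover
  by_contra h
  push_neg at h
  have hA0 : μ A = 0 := le_antisymm h zero_le
  have : μ S ≤ ∑ Y ∈ t, μ (U Y) := (measure_mono ht).trans (measure_biUnion_finset_le t _)
  rw [hsupp] at this
  have : (1 : ℝ≥0∞) ≤ 0 := by
    refine this.trans (le_of_eq ?_)
    refine Finset.sum_eq_zero fun Y _ => ?_
    rw [hUmeas Y Y.2, hA0]
  simp at this

/-- The hypergeometric function `₀F₁(n/2, D²/4)` represented as the integral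
`∫_{V_{n,p}} etr(D M̃ᵀ X) dμ(X) = ∫ exp(∑ⱼ dⱼ X_{j,j}) dμ(X)` over the Stiefel manifold. -/
noncomputable def hypF {n p : ℕ} (hnp : p ≤ n) (μ : Measure (Matrix (Fin n) (Fin p) ℝ))
    (d : Fin p → ℝ) : ℝ :=
  ∫ X, Real.exp (∑ j : Fin p, d j * X (Fin.castLE hnp j) j) ∂μ

/-- For every `δ > 0` there exists a constant `K = K_{n,p,δ} > 0` such that for all diagonal `D`
with positive diagonal entries `d₁,…,d_p`:
`₀F₁(n/2, D²/4) > K · exp((1−δ)(d₁+⋯+d_p))`, where `μ` is the normalized Haar probability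
measure on the Stiefel manifold `V_{n,p}`, `n ≥ p`. -/
theorem stmt3 {n p : ℕ} (hnp : p ≤ n) (μ : Measure (Matrix (Fin n) (Fin p) ℝ))
    (hprob : IsProbabilityMeasure μ)
    (hsupp : μ {X : Matrix (Fin n) (Fin p) ℝ | Xᵀ * X = 1} = 1)
    (hinv : ∀ Q : Matrix (Fin n) (Fin n) ℝ, Qᵀ * Q = 1 →
      Measure.map (fun X => Q * X) μ = μ)
    (δ : ℝ) (hδ : 0 < δ) :
    ∃ K : ℝ, 0 < K ∧ ∀ d : Fin p → ℝ, (∀ j, 0 < d j) →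
      K * Real.exp ((1 - δ) * ∑ j, d j) < hypF hnp μ d := by
  classical
  set ε : ℝ := min δ 1 / 2 with hεdef
  have hε : 0 < ε := by
    have := lt_min hδ one_pos
    positivity
  have hεδ : ε < δ := by
    have h1 : min δ 1 ≤ δ := min_le_left _ _
    have : min δ 1 / 2 < min δ 1 := by
      have := lt_min hδ one_pos
      linarith
    linarith
  set A := {X : Matrix (Fin n) (Fin p) ℝ | ∀ j, 1 - ε < X (Fin.castLE hnp j) j} with hA
  set S := {X : Matrix (Fin n) (Fin p) ℝ | Xᵀ * X = 1} with hSdef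
  have hApos := A_pos hnp μ hprob hsupp hinv ε hε
  have hAfin : μ A ≠ ∞ := measure_ne_top μ A
  have hKA : 0 < (μ A).toReal := ENNReal.toReal_pos hApos.ne' hAfin
  refine ⟨min ((μ A).toReal) (1 / 2), lt_min hKA (by norm_num), ?_⟩
  intro d hd
  rcases Nat.eq_zero_or_pos p with hp | hp
  · -- p = 0
    haveI : IsEmpty (Fin p) := by rw [hp]; exact Fin.isEmpty
    have h0 : ∑ j : Fin p, d j = 0 := by simp
    have h1 : hypF hnp μ d = 1 := by
      simp [hypF, integral_const, measure_univ]
    rw [h1, h0, mul_zero, Real.exp_zero, mul_one]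
    calc min ((μ A).toReal) (1 / 2) ≤ 1 / 2 := min_le_right _ _
      _ < 1 := by norm_num
  · -- p ≥ 1
    haveI : Nonempty (Fin p) := ⟨⟨0, hp⟩⟩
    set Sd := ∑ j, d j with hSd
    have hSdpos : 0 < Sd := Finset.sum_pos (fun j _ => hd j) Finset.univ_nonempty
    set g := fun X : Matrix (Fin n) (Fin p) ℝ =>
      Real.exp (∑ j : Fin p, d j * X (Fin.castLE hnp j) j) with hg
    have hcontf : Continuous fun X : Matrix (Fin n) (Fin p) ℝ =>
        ∑ j : Fin p, d j * X (Fin.castLE hnp j) j := by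
      apply continuous_finset_sum
      intro j _
      exact continuous_const.mul ((continuous_apply j).comp (continuous_apply (Fin.castLE hnp j)))
    have hcontg : Continuous g := Real.continuous_exp.comp hcontf
    have hSmeas : MeasurableSet S := by
      have hc : Continuous fun X : Matrix (Fin n) (Fin p) ℝ => Xᵀ * X :=
        (continuous_id.matrix_transpose).matrix_mul continuous_id
      exact (isClosed_eq hc continuous_const).measurableSet
    have haeS : ∀ᵐ X ∂μ, X ∈ S := by
      rw [MeasureTheory.ae_iff]
      have : {X : Matrix (Fin n) (Fin p) ℝ | ¬ X ∈ S} = Sᶜ := rfl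
      rw [this, measure_compl hSmeas (measure_ne_top μ S), hsupp, measure_univ]
      simp
    have hbound : ∀ᵐ X ∂μ, ‖g X‖ ≤ Real.exp Sd := by
      filter_upwards [haeS] with X hX
      rw [Real.norm_of_nonneg (Real.exp_pos _).le]
      apply Real.exp_le_exp.mpr
      rw [hSd]
      apply Finset.sum_le_sum
      intro j _
      have := entry_le_one X hX (Fin.castLE hnp j) j
      nlinarith [hd j]
    have hint : Integrable g μ :=
      Integrable.mono' (integrable_const (Real.exp Sd)) hcontg.aestronglyMeasurable hbound
    have hmeasA : MeasurableSet A := by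
      have : IsOpen A := by
        have : A = ⋂ j : Fin p,
            (fun X : Matrix (Fin n) (Fin p) ℝ => X (Fin.castLE hnp j) j) ⁻¹' Set.Ioi (1 - ε) := by
          ext X; simp [hA, Set.mem_iInter]
        rw [this]
        exact isOpen_iInter_of_finite fun j =>
          ((continuous_apply j).comp (continuous_apply (Fin.castLE hnp j))).isOpen_preimage _
            isOpen_Ioi
      exact this.measurableSet
    have hstep2 : Real.exp ((1 - ε) * Sd) * (μ A).toReal ≤ ∫ X in A, g X ∂μ := by
      apply setIntegral_ge_of_const_le_real hmeasA hAfin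
      · intro X hX
        apply Real.exp_le_exp.mpr
        rw [hSd, Finset.mul_sum]
        apply Finset.sum_le_sum
        intro j _
        have h1 := hX j
        have h2 := (hd j).le
        nlinarith
      · exact hint.integrableOn
    have hstep3 : ∫ X in A, g X ∂μ ≤ ∫ X, g X ∂μ :=
      setIntegral_le_integral hint (Filter.Eventually.of_forall fun X => (Real.exp_pos _).le)
    have hstep1 : min ((μ A).toReal) (1 / 2) * Real.exp ((1 - δ) * Sd)
        < Real.exp ((1 - ε) * Sd) * (μ A).toReal := by
      have he : Real.exp ((1 - δ) * Sd) < Real.exp ((1 - ε) * Sd) :=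
        Real.exp_lt_exp.mpr (by nlinarith)
      calc min ((μ A).toReal) (1 / 2) * Real.exp ((1 - δ) * Sd)
          ≤ (μ A).toReal * Real.exp ((1 - δ) * Sd) :=
            mul_le_mul_of_nonneg_right (min_le_left _ _) (Real.exp_pos _).le
        _ < (μ A).toReal * Real.exp ((1 - ε) * Sd) :=
            mul_lt_mul_of_pos_left he hKA
        _ = Real.exp ((1 - ε) * Sd) * (μ A).toReal := mul_comm _ _
    have : hypF hnp μ d = ∫ X, g X ∂μ := rfl
    rw [this]
    calc min ((μ A).toReal) (1 / 2) * Real.exp ((1 - δ) * Sd)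
        < Real.exp ((1 - ε) * Sd) * (μ A).toReal := hstep1
      _ ≤ ∫ X in A, g X ∂μ := hstep2
      _ ≤ ∫ X, g X ∂μ := hstep3
end

section
/- Define ₀F₁(n/2, D²/4) = ∫_{V_{n,p}} exp(Σ_{j=1}^p d_j X_{j,j}) dμ(X), where μ is the normalized Haar measure on the Stiefel manifold V_{n,p} with n ≥ p ≥ 2 and d ∈ ℝ₊^p. Then for each i = 1,…,p the partial derivative satisfies 0 < ∂/∂d_i ₀F₁(n/2, D²/4) < ₀F₁(n/2, D²/4). -/
open Matrix MeasureTheory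

/-- For `n ≥ p ≥ 2`, `d ∈ ℝ₊^p` and each `i`, the partial derivative of
`₀F₁(n/2, D²/4)` in `d_i` exists and satisfies `0 < ∂/∂d_i ₀F₁ < ₀F₁`, where `μ` is the
normalized Haar probability measure on `V_{n,p}`. -/
theorem stmt4 {n p : ℕ} (hp : 2 ≤ p) (hnp : p ≤ n)
    (μ : Measure (Matrix (Fin n) (Fin p) ℝ))
    (hprob : IsProbabilityMeasure μ)
    (hsupp : μ {X : Matrix (Fin n) (Fin p) ℝ | Xᵀ * X = 1} = 1)
    (hinv : ∀ Q : Matrix (Fin n) (Fin n) ℝ, Qᵀ * Q = 1 →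
      Measure.map (fun X => Q * X) μ = μ)
    (d : Fin p → ℝ) (hd : ∀ j, 0 < d j) (i : Fin p) :
    ∃ D : ℝ, HasDerivAt (fun t => hypF hnp μ (Function.update d i t)) D (d i) ∧
      0 < D ∧ D < hypF hnp μ d := by
  classical
  set r : Fin n := Fin.castLE hnp i with hr
  set S : Set (Matrix (Fin n) (Fin p) ℝ) := {X | Xᵀ * X = 1} with hSdef
  -- entry measurability
  have hent : ∀ (k : Fin n) (j : Fin p),
      Measurable fun X : Matrix (Fin n) (Fin p) ℝ => X k j :=
    fun k j => (measurable_pi_apply j).comp (measurable_pi_apply k)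
  -- measurability of weighted diagonal sums
  have hmsum : ∀ (s : Finset (Fin p)) (e : Fin p → ℝ),
      Measurable fun X : Matrix (Fin n) (Fin p) ℝ =>
        ∑ j ∈ s, e j * X (Fin.castLE hnp j) j :=
    fun s e => Finset.measurable_sum _ fun j _ => measurable_const.mul (hent _ _)
  -- S is measurable
  have hSmeas : MeasurableSet S := by
    have : S = ⋂ (a : Fin p), ⋂ (b : Fin p),
        {X : Matrix (Fin n) (Fin p) ℝ |
          (∑ k, X k a * X k b) = (1 : Matrix (Fin p) (Fin p) ℝ) a b} := by
      ext X
      simp only [hSdef, Set.mem_setOf_eq, Set.mem_iInter]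
      constructor
      · intro h a b
        rw [← h, Matrix.mul_apply]
        simp [Matrix.transpose_apply]
      · intro h
        ext a b
        rw [Matrix.mul_apply, ← h a b]
        simp [Matrix.transpose_apply]
    rw [this]
    exact MeasurableSet.iInter fun a => MeasurableSet.iInter fun b =>
      measurableSet_eq_fun (Finset.measurable_sum _ fun k _ => (hent k a).mul (hent k b))
        measurable_const
  -- a.e. membership in S
  have hSae : ∀ᵐ X ∂μ, X ∈ S := by
    rw [ae_iff]
    have : {X : Matrix (Fin n) (Fin p) ℝ | ¬ X ∈ S} = Sᶜ := rfl
    rw [this]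
    exact (prob_compl_eq_zero_iff hSmeas).2 hsupp
  -- entries bounded by 1 on S
  have hbd : ∀ X ∈ S, ∀ (k : Fin n) (j : Fin p), |X k j| ≤ 1 := by
    intro X hX k j
    have h1 : (Xᵀ * X) j j = 1 := by
      rw [hX]; simp [Matrix.one_apply]
    rw [Matrix.mul_apply] at h1
    simp only [Matrix.transpose_apply] at h1
    have h2 : X k j * X k j ≤ ∑ c, X c j * X c j :=
      Finset.single_le_sum (f := fun c => X c j * X c j)
        (fun c _ => mul_self_nonneg _) (Finset.mem_univ k)
    rw [abs_le_one_iff_mul_self_le_one]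
    linarith
  -- integrability of measurable functions bounded on S
  have hintS : ∀ (f : Matrix (Fin n) (Fin p) ℝ → ℝ), Measurable f → ∀ C : ℝ,
      (∀ X ∈ S, |f X| ≤ C) → Integrable f μ := by
    intro f hf C hC
    refine ⟨hf.aestronglyMeasurable, ?_⟩
    apply MeasureTheory.HasFiniteIntegral.of_bounded (C := C)
    filter_upwards [hSae] with X hX
    simpa using hC X hX
  -- the sum splits
  set c : Matrix (Fin n) (Fin p) ℝ → ℝ :=
    fun X => ∑ j ∈ Finset.univ.erase i, d j * X (Fin.castLE hnp j) j with hcdef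
  have hcm : Measurable c := hmsum _ _
  have hsum : ∀ (t : ℝ) (X : Matrix (Fin n) (Fin p) ℝ),
      (∑ j : Fin p, Function.update d i t j * X (Fin.castLE hnp j) j)
        = t * X r i + c X := by
    intro t X
    rw [← Finset.add_sum_erase _ _ (Finset.mem_univ i)]
    congr 1
    · simp [hr]
    · exact Finset.sum_congr rfl fun j hj => by
        rw [Function.update_of_ne (Finset.ne_of_mem_erase hj)]
  have hsum' : ∀ X : Matrix (Fin n) (Fin p) ℝ,
      (∑ j : Fin p, d j * X (Fin.castLE hnp j) j) = d i * X r i + c X := by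
    intro X
    have := hsum (d i) X
    rwa [Function.update_eq_self] at this
  -- F and F'
  set F : ℝ → Matrix (Fin n) (Fin p) ℝ → ℝ := fun t X =>
    Real.exp (∑ j : Fin p, Function.update d i t j * X (Fin.castLE hnp j) j) with hFdef
  set F' : ℝ → Matrix (Fin n) (Fin p) ℝ → ℝ := fun t X =>
    X r i * Real.exp (∑ j : Fin p, Function.update d i t j * X (Fin.castLE hnp j) j)
    with hF'def
  have hFm : ∀ t, Measurable (F t) := fun t => (hmsum _ _).exp
  have hF'm : ∀ t, Measurable (F' t) := fun t => (hent r i).mul (hmsum _ _).exp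
  set C : ℝ := Real.exp (∑ j : Fin p, (d j + 1)) with hCdef
  -- bound on S for t in the unit ball around d i
  have hball : ∀ X ∈ S, ∀ t ∈ Metric.ball (d i) 1, |F' t X| ≤ C := by
    intro X hX t ht
    have hexp : (∑ j : Fin p, Function.update d i t j * X (Fin.castLE hnp j) j)
        ≤ ∑ j : Fin p, (d j + 1) := by
      apply Finset.sum_le_sum
      intro j _
      have hXb := hbd X hX (Fin.castLE hnp j) j
      have habs : |Function.update d i t j| ≤ d j + 1 := by
        by_cases h : j = i
        · subst h
          rw [Function.update_self]
          have h1 : |t - d j| < 1 := by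
            have := Metric.mem_ball.1 ht
            rwa [Real.dist_eq] at this
          have h2 : |t| ≤ |t - d j| + |d j| := by
            have := abs_add_le (t - d j) (d j)
            simpa using this
          have h3 := abs_of_pos (hd j)
          linarith
        · rw [Function.update_of_ne h, abs_of_pos (hd j)]
          linarith
      calc Function.update d i t j * X (Fin.castLE hnp j) j
          ≤ |Function.update d i t j * X (Fin.castLE hnp j) j| := le_abs_self _
        _ = |Function.update d i t j| * |X (Fin.castLE hnp j) j| := abs_mul _ _
        _ ≤ (d j + 1) * 1 := by
            apply mul_le_mul habs hXb (abs_nonneg _) (by linarith [hd j])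
        _ = d j + 1 := mul_one _
    simp only [hF'def]
    rw [abs_mul, Real.abs_exp]
    calc |X r i| * Real.exp (∑ j : Fin p, Function.update d i t j * X (Fin.castLE hnp j) j)
        ≤ 1 * Real.exp (∑ j : Fin p, (d j + 1)) :=
          mul_le_mul (hbd X hX r i) (Real.exp_le_exp.2 hexp) (Real.exp_nonneg _)
            zero_le_one
      _ = C := (one_mul _).trans hCdef.symm
  -- differentiate under the integral sign
  have hderivFull := hasDerivAt_integral_of_dominated_loc_of_deriv_le
    (μ := μ) (F := F) (F' := F') (x₀ := d i) (bound := fun _ => C) (s := Metric.ball (d i) 1)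
    (Metric.ball_mem_nhds _ one_pos)
    (Filter.Eventually.of_forall fun t => (hFm t).aestronglyMeasurable)
    (hintS (F (d i)) (hFm (d i)) C (by
      intro X hX
      have := hball X hX (d i) (Metric.mem_ball_self one_pos)
      simp only [hF'def] at this
      simp only [hFdef]
      rw [Real.abs_exp]
      calc Real.exp (∑ j : Fin p, Function.update d i (d i) j * X (Fin.castLE hnp j) j)
          ≤ Real.exp (∑ j : Fin p, (d j + 1)) := by
            apply Real.exp_le_exp.2
            apply Finset.sum_le_sum
            intro j _
            rw [Function.update_eq_self]
            have hXb := hbd X hX (Fin.castLE hnp j) j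
            calc d j * X (Fin.castLE hnp j) j ≤ |d j * X (Fin.castLE hnp j) j| := le_abs_self _
              _ = |d j| * |X (Fin.castLE hnp j) j| := abs_mul _ _
              _ ≤ (d j + 1) * 1 := by
                  apply mul_le_mul (by rw [abs_of_pos (hd j)]; linarith) hXb (abs_nonneg _)
                    (by linarith [hd j])
              _ = d j + 1 := mul_one _
        _ = C := hCdef.symm))
    (hF'm (d i)).aestronglyMeasurable
    (by
      filter_upwards [hSae] with X hX t ht
      rw [Real.norm_eq_abs]
      exact hball X hX t ht)
    (hintS _ measurable_const C (fun X _ => by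
      rw [abs_of_pos (Real.exp_pos _)]))
    (by
      apply Filter.Eventually.of_forall
      intro X t _
      have key : HasDerivAt (fun s => Real.exp (s * X r i + c X))
          (X r i * Real.exp (t * X r i + c X)) t := by
        have h := (((hasDerivAt_id t).mul_const (X r i)).add_const (c X)).exp
        simpa [mul_comm] using h
      have heq : (fun s => F s X) = fun s => Real.exp (s * X r i + c X) := by
        funext s
        simp only [hFdef]
        rw [hsum]
      rw [heq]
      have : F' t X = X r i * Real.exp (t * X r i + c X) := by
        simp only [hF'def]
        rw [hsum]
      rw [this]
      exact key)
  obtain ⟨hDint, hDderiv⟩ := hderivFull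
  -- orthogonal invariance machinery
  have hmeasQ : ∀ Q : Matrix (Fin n) (Fin n) ℝ,
      Measurable fun X : Matrix (Fin n) (Fin p) ℝ => Q * X := by
    intro Q
    apply measurable_pi_lambda
    intro a
    apply measurable_pi_lambda
    intro b
    simp only [Matrix.mul_apply]
    exact Finset.measurable_sum _ fun k _ => measurable_const.mul (hent k b)
  have hsetinv : ∀ Q : Matrix (Fin n) (Fin n) ℝ, Qᵀ * Q = 1 →
      ∀ A : Set (Matrix (Fin n) (Fin p) ℝ), MeasurableSet A →
        μ ((fun X => Q * X) ⁻¹' A) = μ A := by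
    intro Q hQ A hA
    conv_rhs => rw [← hinv Q hQ]
    rw [Measure.map_apply (hmeasQ Q) hA]
  have hintinv : ∀ Q : Matrix (Fin n) (Fin n) ℝ, Qᵀ * Q = 1 →
      ∀ f : Matrix (Fin n) (Fin p) ℝ → ℝ, Measurable f →
        (∫ X, f (Q * X) ∂μ) = ∫ X, f X ∂μ := by
    intro Q hQ f hf
    conv_rhs => rw [← hinv Q hQ]
    rw [integral_map (hmeasQ Q).aemeasurable]
    rw [hinv Q hQ]
    exact hf.aestronglyMeasurable
  have hQS : ∀ Q : Matrix (Fin n) (Fin n) ℝ, Qᵀ * Q = 1 → ∀ X ∈ S, Q * X ∈ S := by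
    intro Q hQ X hX
    have hX' : Xᵀ * X = 1 := hX
    show (Q * X)ᵀ * (Q * X) = 1
    rw [Matrix.transpose_mul, Matrix.mul_assoc, ← Matrix.mul_assoc Qᵀ, hQ,
      Matrix.one_mul, hX']
  have hμne : (MeasureTheory.ae μ).NeBot := ae_neBot.2 hprob.ne_zero
  -- reflection matrix
  set Qn : Matrix (Fin n) (Fin n) ℝ :=
    Matrix.diagonal (fun k => if k = r then (-1:ℝ) else 1) with hQndef
  have hQnorth : Qnᵀ * Qn = 1 := by
    rw [hQndef, Matrix.diagonal_transpose, Matrix.diagonal_mul_diagonal]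
    ext a b
    simp only [Matrix.diagonal_apply, Matrix.one_apply]
    split_ifs <;> norm_num
  have hQnact : ∀ (X : Matrix (Fin n) (Fin p) ℝ) (k : Fin n) (j : Fin p),
      (Qn * X) k j = (if k = r then -1 else 1) * X k j := by
    intro X k j
    rw [hQndef, Matrix.diagonal_mul]
  have hQnri : ∀ X : Matrix (Fin n) (Fin p) ℝ, (Qn * X) r i = -X r i := by
    intro X
    rw [hQnact, if_pos rfl]
    ring
  -- swap matrices
  have hswap : ∀ k : Fin n, ∃ Q : Matrix (Fin n) (Fin n) ℝ, Qᵀ * Q = 1 ∧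
      ∀ (X : Matrix (Fin n) (Fin p) ℝ) (j : Fin p), (Q * X) r j = X k j := by
    intro k
    refine ⟨Matrix.of fun a b : Fin n => if (Equiv.swap r k) b = a then (1:ℝ) else 0, ?_, ?_⟩
    · ext a b
      simp only [Matrix.mul_apply, Matrix.transpose_apply, Matrix.of_apply, Matrix.one_apply,
        ite_mul, one_mul, zero_mul]
      rw [Finset.sum_ite_eq (Finset.univ) (Equiv.swap r k a)
        (fun e => if Equiv.swap r k b = e then (1:ℝ) else 0)]
      simp [Equiv.apply_eq_iff_eq, eq_comm]
    · intro X j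
      simp only [Matrix.mul_apply, Matrix.of_apply, ite_mul, one_mul, zero_mul]
      have hiff : ∀ b : Fin n, (Equiv.swap r k b = r) ↔ (b = Equiv.swap r k r) := by
        intro b
        constructor
        · intro h
          have := congrArg (Equiv.swap r k) h
          rwa [Equiv.swap_apply_self] at this
        · intro h
          rw [h, Equiv.swap_apply_self]
      simp only [hiff]
      rw [Finset.sum_ite_eq' Finset.univ (Equiv.swap r k r) (fun b => X b j)]
      simp [Equiv.swap_apply_left]
  -- measurability of level sets of entries
  have hAz : ∀ (z : ℝ) (k : Fin n),
      MeasurableSet {X : Matrix (Fin n) (Fin p) ℝ | X k i = z} := fun z k =>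
    measurableSet_eq_fun (hent k i) measurable_const
  have hae1 : ∀ A : Set (Matrix (Fin n) (Fin p) ℝ), MeasurableSet A → μ A = 1 →
      ∀ᵐ X ∂μ, X ∈ A := by
    intro A hA h1
    rw [ae_iff]
    exact (prob_compl_eq_zero_iff hA).2 h1
  -- the diagonal entry is not a.s. zero
  have hzero : μ {X : Matrix (Fin n) (Fin p) ℝ | X r i = 0} < 1 := by
    by_contra h
    push_neg at h
    have hA1 : μ {X : Matrix (Fin n) (Fin p) ℝ | X r i = 0} = 1 :=
      le_antisymm prob_le_one h
    have hk : ∀ k : Fin n, ∀ᵐ X ∂μ, X k i = 0 := by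
      intro k
      obtain ⟨Q, hQo, hQa⟩ := hswap k
      have hval := hsetinv Q hQo _ (hAz 0 r)
      have hpre : ((fun X => Q * X) ⁻¹' {X | X r i = 0})
          = {X : Matrix (Fin n) (Fin p) ℝ | X k i = 0} := by
        ext X
        simp [Set.mem_preimage, Set.mem_setOf_eq, hQa]
      rw [hpre, hA1] at hval
      exact hae1 _ (hAz 0 k) hval
    have hall : ∀ᵐ X ∂μ, (∀ k : Fin n, X k i = 0) ∧ X ∈ S :=
      (ae_all_iff.2 hk).and hSae
    obtain ⟨X, h0, hXS⟩ := hall.exists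
    have hX' : Xᵀ * X = 1 := hXS
    have h1 : (Xᵀ * X) i i = 1 := by rw [hX']; simp [Matrix.one_apply]
    rw [Matrix.mul_apply] at h1
    simp only [Matrix.transpose_apply] at h1
    simp [h0] at h1
  -- the diagonal entry is not a.s. one
  have hone : μ {X : Matrix (Fin n) (Fin p) ℝ | X r i = 1} < 1 := by
    by_contra h
    push_neg at h
    have hA1 : μ {X : Matrix (Fin n) (Fin p) ℝ | X r i = 1} = 1 :=
      le_antisymm prob_le_one h
    have hval := hsetinv Qn hQnorth _ (hAz 1 r)
    have hpre : ((fun X => Qn * X) ⁻¹' {X | X r i = 1})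
        = {X : Matrix (Fin n) (Fin p) ℝ | X r i = -1} := by
      ext X
      simp only [Set.mem_preimage, Set.mem_setOf_eq, hQnri]
      constructor <;> intro h' <;> linarith
    rw [hpre, hA1] at hval
    have hm1 := hae1 _ (hAz (-1) r) hval
    have hp1 := hae1 _ (hAz 1 r) hA1
    obtain ⟨X, ha, hb⟩ := (hm1.and hp1).exists
    have ha' : X r i = -1 := ha
    have hb' : X r i = 1 := hb
    linarith
  -- the function g and its properties
  set g : Matrix (Fin n) (Fin p) ℝ → ℝ :=
    fun X => X r i * Real.exp (d i * X r i + c X) with hgdef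
  have hgF' : F' (d i) = g := by
    funext X
    simp only [hF'def, hgdef, Function.update_eq_self]
    rw [hsum']
  have hgm : Measurable g :=
    (hent r i).mul ((measurable_const.mul (hent r i)).add hcm).exp
  have hcQn : ∀ X : Matrix (Fin n) (Fin p) ℝ, c (Qn * X) = c X := by
    intro X
    apply Finset.sum_congr rfl
    intro j hj
    rw [hQnact, if_neg]
    · ring
    · intro hcontr
      exact (Finset.ne_of_mem_erase hj) (Fin.castLE_injective hnp hcontr)
  have hφeq : ∀ X : Matrix (Fin n) (Fin p) ℝ, g X + g (Qn * X)
      = (X r i * (Real.exp (d i * X r i) - Real.exp (-(d i * X r i)))) * Real.exp (c X) := by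
    intro X
    simp only [hgdef, hQnri, hcQn, mul_neg]
    rw [Real.exp_add, Real.exp_add]
    ring
  have hkey : ∀ x : ℝ, 0 ≤ x * (Real.exp (d i * x) - Real.exp (-(d i * x))) := by
    intro x
    rcases le_or_gt 0 x with hx | hx
    · have h1 : Real.exp (-(d i * x)) ≤ Real.exp (d i * x) :=
        Real.exp_le_exp.2 (by nlinarith [hd i])
      exact mul_nonneg hx (by linarith)
    · have h1 : Real.exp (d i * x) ≤ Real.exp (-(d i * x)) :=
        Real.exp_le_exp.2 (by nlinarith [hd i])
      nlinarith
  have hφnn : ∀ X : Matrix (Fin n) (Fin p) ℝ, 0 ≤ g X + g (Qn * X) := by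
    intro X
    rw [hφeq]
    exact mul_nonneg (hkey _) (Real.exp_nonneg _)
  have hφsupp : {X : Matrix (Fin n) (Fin p) ℝ | X r i ≠ 0}
      ⊆ Function.support (fun X => g X + g (Qn * X)) := by
    intro X hx
    have hx' : X r i ≠ 0 := hx
    rw [Function.mem_support, hφeq]
    apply mul_ne_zero _ (Real.exp_ne_zero _)
    apply mul_ne_zero hx'
    intro hcontr
    have : Real.exp (d i * X r i) = Real.exp (-(d i * X r i)) := by linarith [sub_eq_zero.1 hcontr]
    rw [Real.exp_eq_exp] at this
    have : d i * X r i = 0 := by linarith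
    exact (mul_ne_zero (ne_of_gt (hd i)) hx') this
  have hposne : ∀ z : ℝ, μ {X : Matrix (Fin n) (Fin p) ℝ | X r i = z} < 1 →
      0 < μ {X : Matrix (Fin n) (Fin p) ℝ | X r i ≠ z} := by
    intro z hz
    rw [pos_iff_ne_zero]
    intro hcontr
    have : {X : Matrix (Fin n) (Fin p) ℝ | X r i ≠ z}
        = {X : Matrix (Fin n) (Fin p) ℝ | X r i = z}ᶜ := rfl
    rw [this] at hcontr
    exact absurd ((prob_compl_eq_zero_iff (hAz z r)).1 hcontr) (ne_of_lt hz)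
  -- integrability of g and g ∘ Qn
  have hint_g : Integrable g μ := by
    rw [← hgF']
    exact hintS _ (hF'm (d i)) C (fun X hX => hball X hX (d i) (Metric.mem_ball_self one_pos))
  have hint_gq : Integrable (fun X => g (Qn * X)) μ := by
    apply hintS _ (hgm.comp (hmeasQ Qn)) C
    intro X hX
    have hmem := hQS Qn hQnorth X hX
    have := hball (Qn * X) hmem (d i) (Metric.mem_ball_self one_pos)
    rw [← hgF']
    exact this
  have hswapint : (∫ X, g (Qn * X) ∂μ) = ∫ X, g X ∂μ := hintinv Qn hQnorth g hgm
  -- positivity of the integral of g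
  have hgpos : 0 < ∫ X, g X ∂μ := by
    have hφint : Integrable (fun X => g X + g (Qn * X)) μ := hint_g.add hint_gq
    have hφpos : 0 < ∫ X, (g X + g (Qn * X)) ∂μ := by
      rw [integral_pos_iff_support_of_nonneg_ae (Filter.Eventually.of_forall hφnn) hφint]
      exact lt_of_lt_of_le (hposne 0 hzero) (measure_mono hφsupp)
    rw [integral_add hint_g hint_gq, hswapint] at hφpos
    linarith
  -- the comparison function h
  set h : Matrix (Fin n) (Fin p) ℝ → ℝ :=
    fun X => Real.exp (d i * X r i + c X) with hhdef
  have hhm : Measurable h := ((measurable_const.mul (hent r i)).add hcm).exp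
  have hhF : F (d i) = h := by
    funext X
    simp only [hFdef, hhdef, Function.update_eq_self]
    rw [hsum']
  have hint_h : Integrable h μ := by
    rw [← hhF]
    apply hintS _ (hFm (d i)) C
    intro X hX
    simp only [hFdef]
    rw [Real.abs_exp]
    calc Real.exp (∑ j : Fin p, Function.update d i (d i) j * X (Fin.castLE hnp j) j)
        ≤ Real.exp (∑ j : Fin p, (d j + 1)) := by
          apply Real.exp_le_exp.2
          apply Finset.sum_le_sum
          intro j _
          rw [Function.update_eq_self]
          have hXb := hbd X hX (Fin.castLE hnp j) j
          calc d j * X (Fin.castLE hnp j) j ≤ |d j * X (Fin.castLE hnp j) j| := le_abs_self _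
            _ = |d j| * |X (Fin.castLE hnp j) j| := abs_mul _ _
            _ ≤ (d j + 1) * 1 := by
                apply mul_le_mul (by rw [abs_of_pos (hd j)]; linarith) hXb (abs_nonneg _)
                  (by linarith [hd j])
            _ = d j + 1 := mul_one _
      _ = C := hCdef.symm
  refine ⟨∫ X, F' (d i) X ∂μ, ?_, ?_, ?_⟩
  · exact hDderiv
  · have hrw : (∫ X, F' (d i) X ∂μ) = ∫ X, g X ∂μ := by rw [hgF']
    rw [hrw]
    exact hgpos
  · have hEq1 : (∫ X, F' (d i) X ∂μ) = ∫ X, g X ∂μ := by rw [hgF']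
    have hEq2 : hypF hnp μ d = ∫ X, h X ∂μ := by
      show (∫ X, Real.exp (∑ j : Fin p, d j * X (Fin.castLE hnp j) j) ∂μ) = _
      congr 1
      funext X
      simp only [hhdef]
      rw [hsum']
    have hψnn : ∀ᵐ X ∂μ, 0 ≤ h X - g X := by
      filter_upwards [hSae] with X hX
      have hx1 : X r i ≤ 1 := le_of_abs_le (hbd X hX r i)
      simp only [hhdef, hgdef]
      nlinarith [Real.exp_pos (d i * X r i + c X)]
    have hψint : Integrable (fun X => h X - g X) μ := hint_h.sub hint_g
    have hψsupp : {X : Matrix (Fin n) (Fin p) ℝ | X r i ≠ 1}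
        ⊆ Function.support (fun X => h X - g X) := by
      intro X hx
      have hx' : X r i ≠ 1 := hx
      rw [Function.mem_support]
      simp only [hhdef, hgdef]
      intro hcontr
      have hfac : Real.exp (d i * X r i + c X) * (1 - X r i) = 0 := by
        linear_combination hcontr
      rcases mul_eq_zero.1 hfac with h1 | h1
      · exact Real.exp_ne_zero _ h1
      · exact hx' (by linarith)
    have hψpos : 0 < ∫ X, (h X - g X) ∂μ := by
      rw [integral_pos_iff_support_of_nonneg_ae hψnn hψint]
      exact lt_of_lt_of_le (hposne 1 hone) (measure_mono hψsupp)
    rw [integral_sub hint_h hint_g] at hψpos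
    rw [hEq1, hEq2]
    linarith
end

section
/- For ν ≥ 1/2 and x > 0, the modified Bessel function ratio satisfies I_ν(x)/I_{ν−1}(x) ≤ x / ((ν − 1/2) + √((ν − 1/2)² + x²)). -/
set_option maxHeartbeats 1000000

/-- The modified Bessel function of the first kind,
`I_ν(x) = Σ_{k≥0} (x/2)^{2k+ν} / (k! Γ(k+ν+1))`. -/
noncomputable def besselI (ν x : ℝ) : ℝ :=
  ∑' k : ℕ, (x / 2) ^ (2 * (k : ℝ) + ν) / ((k.factorial : ℝ) * Real.Gamma ((k : ℝ) + ν + 1))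

open Finset Real

namespace Seg

noncomputable def c (μ : ℝ) (i : ℕ) : ℝ := 1 / (i.factorial * Real.Gamma (i + μ + 1))

lemma c_pos {μ : ℝ} (hμ : -1 < μ) (i : ℕ) : 0 < c μ i := by
  have h1 : (0:ℝ) < i + μ + 1 := by have : (0:ℝ) ≤ i := Nat.cast_nonneg i; linarith
  have := Real.Gamma_pos_of_pos h1
  have h2 : (0:ℝ) < i.factorial := by exact_mod_cast i.factorial_pos
  unfold c; positivity

lemma c_succ {μ : ℝ} (hμ : -1 < μ) (i : ℕ) : ((i:ℝ)+1) * c μ (i+1) = c (μ+1) i := by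
  unfold c
  have h : Real.Gamma (↑(i+1) + μ + 1) = Real.Gamma (↑i + (μ+1) + 1) := by
    push_cast; ring_nf
  have hi : (0:ℝ) ≤ i := Nat.cast_nonneg i
  have hg : Real.Gamma (↑i + (μ+1) + 1) ≠ 0 :=
    ne_of_gt (Real.Gamma_pos_of_pos (by linarith))
  have h2 : ((i.factorial :ℝ)) ≠ 0 := by positivity
  have h3 : ((i:ℝ)+1) ≠ 0 := by positivity
  rw [h, Nat.factorial_succ]
  push_cast
  field_simp

noncomputable def W (μ ρ : ℝ) (k : ℕ) : ℝ :=
  Real.Gamma (μ + ρ + 2*k + 1) /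
    (Real.Gamma (μ + ρ + k + 1) * k.factorial * Real.Gamma (k + μ + 1) * Real.Gamma (k + ρ + 1))

lemma W_pos {μ ρ : ℝ} (hμ : -1 < μ) (hρ : -1 < ρ) (hσ : -1 < μ + ρ) (k : ℕ) : 0 < W μ ρ k := by
  have hk : (0:ℝ) ≤ k := Nat.cast_nonneg k
  have g1 := Real.Gamma_pos_of_pos (show (0:ℝ) < μ + ρ + 2*k + 1 by linarith)
  have g2 := Real.Gamma_pos_of_pos (show (0:ℝ) < μ + ρ + k + 1 by linarith)
  have g3 := Real.Gamma_pos_of_pos (show (0:ℝ) < k + μ + 1 by linarith)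
  have g4 := Real.Gamma_pos_of_pos (show (0:ℝ) < k + ρ + 1 by linarith)
  have h2 : (0:ℝ) < k.factorial := by exact_mod_cast k.factorial_pos
  unfold W; positivity

lemma vandermonde {μ ρ : ℝ} (hμ : -1 < μ) (hρ : -1 < ρ) (hσ : -1 < μ + ρ) (k : ℕ) :
    ∑ p ∈ Finset.HasAntidiagonal.antidiagonal k, c μ p.1 * c ρ p.2 = W μ ρ k := by
  induction k generalizing μ ρ with
  | zero =>
    have g2 : Real.Gamma (μ + ρ + 1) ≠ 0 :=
      ne_of_gt (Real.Gamma_pos_of_pos (by linarith))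
    simp [c, W]
    have g3 : Real.Gamma (μ + 1) ≠ 0 := ne_of_gt (Real.Gamma_pos_of_pos (by linarith))
    have g4 : Real.Gamma (ρ + 1) ≠ 0 := ne_of_gt (Real.Gamma_pos_of_pos (by linarith))
    field_simp
  | succ k ih =>
    have key : ((k:ℝ)+1) * ∑ p ∈ Finset.HasAntidiagonal.antidiagonal (k+1), c μ p.1 * c ρ p.2
        = W (μ+1) ρ k + W μ (ρ+1) k := by
      have expand : ((k:ℝ)+1) * ∑ p ∈ Finset.HasAntidiagonal.antidiagonal (k+1), c μ p.1 * c ρ p.2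
          = (∑ p ∈ Finset.HasAntidiagonal.antidiagonal (k+1), (p.1:ℝ) * (c μ p.1 * c ρ p.2))
            + (∑ p ∈ Finset.HasAntidiagonal.antidiagonal (k+1), (p.2:ℝ) * (c μ p.1 * c ρ p.2)) := by
        rw [Finset.mul_sum, ← Finset.sum_add_distrib]
        apply Finset.sum_congr rfl
        intro p hp
        have h := Finset.HasAntidiagonal.mem_antidiagonal.mp hp
        have h' : (p.1:ℝ) + p.2 = (k:ℝ) + 1 := by exact_mod_cast congrArg Nat.cast h
        linear_combination (-(c μ p.1 * c ρ p.2)) * h'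
      have h1 : (∑ p ∈ Finset.HasAntidiagonal.antidiagonal (k+1), (p.1:ℝ) * (c μ p.1 * c ρ p.2))
          = ∑ p ∈ Finset.HasAntidiagonal.antidiagonal k, c (μ+1) p.1 * c ρ p.2 := by
        rw [Finset.Nat.sum_antidiagonal_succ]
        simp only [Nat.cast_zero, zero_mul, zero_add]
        apply Finset.sum_congr rfl
        intro p hp
        have h := c_succ hμ p.1
        push_cast
        linear_combination (c ρ p.2) * h
      have h2 : (∑ p ∈ Finset.HasAntidiagonal.antidiagonal (k+1), (p.2:ℝ) * (c μ p.1 * c ρ p.2))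
          = ∑ p ∈ Finset.HasAntidiagonal.antidiagonal k, c μ p.1 * c (ρ+1) p.2 := by
        rw [Finset.Nat.sum_antidiagonal_succ']
        simp only [Nat.cast_zero, zero_mul, add_zero, zero_add, mul_zero]
        apply Finset.sum_congr rfl
        intro p hp
        have h := c_succ hρ p.2
        push_cast
        linear_combination (c μ p.1) * h
      rw [expand, h1, h2, ih (by linarith) hρ (by linarith), ih hμ (by linarith) (by linarith)]
    have hk : (0:ℝ) ≤ k := Nat.cast_nonneg k
    have gauss : W (μ+1) ρ k + W μ (ρ+1) k = ((k:ℝ)+1) * W μ ρ (k+1) := by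
      unfold W
      rw [Nat.factorial_succ]
      push_cast
      rw [show μ + 1 + ρ + 2*(k:ℝ) + 1 = (μ+ρ+2*(k:ℝ)+1) + 1 by ring,
          show μ + (ρ + 1) + 2*(k:ℝ) + 1 = (μ+ρ+2*(k:ℝ)+1) + 1 by ring,
          show μ + ρ + 2*((k:ℝ)+1) + 1 = (μ+ρ+2*(k:ℝ)+1) + 1 + 1 by ring,
          show μ + 1 + ρ + (k:ℝ) + 1 = μ+ρ+((k:ℝ)+1)+1 by ring,
          show μ + (ρ+1) + (k:ℝ) + 1 = μ+ρ+((k:ℝ)+1)+1 by ring,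
          show (k:ℝ) + (μ+1) + 1 = ((k:ℝ)+μ+1)+1 by ring,
          show (k:ℝ) + (ρ+1) + 1 = ((k:ℝ)+ρ+1)+1 by ring,
          show (k:ℝ) + 1 + μ + 1 = ((k:ℝ)+μ+1)+1 by ring,
          show (k:ℝ) + 1 + ρ + 1 = ((k:ℝ)+ρ+1)+1 by ring,
          Real.Gamma_add_one (show (μ+ρ+2*(k:ℝ)+1) + 1 ≠ 0 by linarith),
          Real.Gamma_add_one (show (μ+ρ+2*(k:ℝ)+1) ≠ 0 by linarith),
          Real.Gamma_add_one (show ((k:ℝ)+μ+1) ≠ 0 by linarith),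
          Real.Gamma_add_one (show ((k:ℝ)+ρ+1) ≠ 0 by linarith)]
      have g1 := Real.Gamma_pos_of_pos (show (0:ℝ) < μ+ρ+2*(k:ℝ)+1 by linarith)
      have g2 := Real.Gamma_pos_of_pos (show (0:ℝ) < μ+ρ+((k:ℝ)+1)+1 by linarith)
      have g3 := Real.Gamma_pos_of_pos (show (0:ℝ) < (k:ℝ)+μ+1 by linarith)
      have g4 := Real.Gamma_pos_of_pos (show (0:ℝ) < (k:ℝ)+ρ+1 by linarith)
      have hf : (0:ℝ) < k.factorial := by exact_mod_cast k.factorial_pos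
      have n1 : (μ+ρ+2*(k:ℝ)+1) + 1 ≠ 0 := by linarith
      have n2 : (μ+ρ+2*(k:ℝ)+1) ≠ 0 := by linarith
      have n3 : ((k:ℝ)+μ+1) ≠ 0 := by linarith
      have n4 : ((k:ℝ)+ρ+1) ≠ 0 := by linarith
      have n5 : ((k:ℝ)+1) ≠ 0 := by positivity
      have n6 : Real.Gamma (μ+ρ+2*(k:ℝ)+1) ≠ 0 := ne_of_gt g1
      have n7 : Real.Gamma (μ+ρ+((k:ℝ)+1)+1) ≠ 0 := ne_of_gt g2
      have n8 : Real.Gamma ((k:ℝ)+μ+1) ≠ 0 := ne_of_gt g3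
      have n9 : Real.Gamma ((k:ℝ)+ρ+1) ≠ 0 := ne_of_gt g4
      have n10 : ((k.factorial:ℝ)) ≠ 0 := ne_of_gt hf
      field_simp
      ring
    have hk1 : ((k:ℝ)+1) ≠ 0 := by positivity
    have := key.trans gauss
    exact mul_left_cancel₀ hk1 this


noncomputable def term (μ t : ℝ) (k : ℕ) : ℝ := t ^ k * c μ k

lemma term_pos {μ t : ℝ} (hμ : -1 < μ) (ht : 0 < t) (k : ℕ) : 0 < term μ t k := by
  have := c_pos hμ k; unfold term; positivity

lemma c_ratio {μ : ℝ} (hμ : -1 < μ) (k : ℕ) :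
    c μ (k+1) * (((k:ℝ)+1) * ((k:ℝ) + μ + 1)) = c μ k := by
  unfold c
  have hk : (0:ℝ) ≤ k := Nat.cast_nonneg k
  have hg : Real.Gamma ((k:ℝ) + μ + 1) ≠ 0 := ne_of_gt (Real.Gamma_pos_of_pos (by linarith))
  have h : Real.Gamma (↑(k+1) + μ + 1) = ((k:ℝ)+μ+1) * Real.Gamma ((k:ℝ)+μ+1) := by
    rw [show ((k+1:ℕ):ℝ) + μ + 1 = ((k:ℝ)+μ+1) + 1 by push_cast; ring,
        Real.Gamma_add_one (by linarith)]
  rw [h, Nat.factorial_succ]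
  have h2 : ((k.factorial:ℝ)) ≠ 0 := by positivity
  have h3 : ((k:ℝ)+1) ≠ 0 := by positivity
  have h4 : ((k:ℝ)+μ+1) ≠ 0 := by linarith
  push_cast
  field_simp

lemma summable_term {μ t : ℝ} (hμ : -1 < μ) (ht : 0 < t) : Summable (term μ t) := by
  apply summable_of_ratio_test_tendsto_lt_one (l := 0) one_pos
  · exact Filter.Eventually.of_forall (fun k => ne_of_gt (term_pos hμ ht k))
  · have heq : ∀ k : ℕ, ‖term μ t (k+1)‖ / ‖term μ t k‖ = t / (((k:ℝ)+1) * ((k:ℝ)+μ+1)) := by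
      intro k
      have hk : (0:ℝ) ≤ k := Nat.cast_nonneg k
      rw [Real.norm_of_nonneg (term_pos hμ ht (k+1)).le,
          Real.norm_of_nonneg (term_pos hμ ht k).le]
      have h1 : term μ t k ≠ 0 := ne_of_gt (term_pos hμ ht k)
      have h2 : ((k:ℝ)+1) * ((k:ℝ)+μ+1) ≠ 0 := by
        have hp : (0:ℝ) < ((k:ℝ)+1) * ((k:ℝ)+μ+1) :=
          mul_pos (by positivity) (by linarith)
        exact ne_of_gt hp
      rw [div_eq_div_iff h1 h2]
      unfold term
      linear_combination (t^(k+1)) * (c_ratio hμ k)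
    simp_rw [heq]
    have hb : ∀ k : ℕ, t / (((k:ℝ)+1) * ((k:ℝ)+μ+1)) ≤ (t/(μ+1)) * (1/((k:ℝ)+1)) := by
      intro k
      have hk : (0:ℝ) ≤ k := Nat.cast_nonneg k
      rw [div_mul_div_comm, mul_one]
      exact div_le_div_of_nonneg_left ht.le
        (mul_pos (by linarith) (by positivity)) (by nlinarith)
    have h0 : ∀ k : ℕ, 0 ≤ t / (((k:ℝ)+1) * ((k:ℝ)+μ+1)) := by
      intro k
      have hk : (0:ℝ) ≤ k := Nat.cast_nonneg k
      exact div_nonneg ht.le (le_of_lt (mul_pos (by linarith) (by linarith)))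
    have hlim : Filter.Tendsto (fun k : ℕ => (t/(μ+1)) * (1/((k:ℝ)+1))) Filter.atTop (nhds 0) := by
      have := tendsto_one_div_add_atTop_nhds_zero_nat (𝕜 := ℝ)
      have h2 := this.const_mul (t/(μ+1))
      simpa using h2
    exact squeeze_zero h0 hb hlim

lemma cauchy {μ ρ t : ℝ} (hμ : -1 < μ) (hρ : -1 < ρ) (hσ : -1 < μ + ρ) (ht : 0 < t) :
    (∑' k, term μ t k) * (∑' k, term ρ t k) = ∑' k, t^k * W μ ρ k := by
  have hf : Summable fun k => ‖term μ t k‖ := by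
    simpa [Real.norm_of_nonneg, fun k => (term_pos hμ ht k).le] using
      (summable_term hμ ht).abs
  have hg : Summable fun k => ‖term ρ t k‖ := by
    simpa [Real.norm_of_nonneg, fun k => (term_pos hρ ht k).le] using
      (summable_term hρ ht).abs
  rw [tsum_mul_tsum_eq_tsum_sum_antidiagonal_of_summable_norm hf hg]
  apply tsum_congr
  intro k
  have : ∀ p ∈ Finset.HasAntidiagonal.antidiagonal k, term μ t p.1 * term ρ t p.2 = t^k * (c μ p.1 * c ρ p.2) := by
    intro p hp
    have h := Finset.HasAntidiagonal.mem_antidiagonal.mp hp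
    unfold term
    rw [show t^p.1 * c μ p.1 * (t^p.2 * c ρ p.2) = t^(p.1+p.2) * (c μ p.1 * c ρ p.2) by
      rw [pow_add]; ring, h]
  rw [Finset.sum_congr rfl this, ← Finset.mul_sum, vandermonde hμ hρ hσ k]

lemma summable_tW {μ ρ t : ℝ} (hμ : -1 < μ) (hρ : -1 < ρ) (hσ : -1 < μ + ρ) (ht : 0 < t) :
    Summable (fun k => t^k * W μ ρ k) := by
  have hf : Summable fun k => ‖term μ t k‖ := by
    simpa [Real.norm_of_nonneg, fun k => (term_pos hμ ht k).le] using
      (summable_term hμ ht).abs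
  have hg : Summable fun k => ‖term ρ t k‖ := by
    simpa [Real.norm_of_nonneg, fun k => (term_pos hρ ht k).le] using
      (summable_term hρ ht).abs
  have h := summable_sum_mul_antidiagonal_of_summable_norm' hf (summable_term hμ ht)
      hg (summable_term hρ ht)
  apply h.congr
  intro k
  have : ∀ p ∈ Finset.HasAntidiagonal.antidiagonal k, term μ t p.1 * term ρ t p.2 = t^k * (c μ p.1 * c ρ p.2) := by
    intro p hp
    have h := Finset.HasAntidiagonal.mem_antidiagonal.mp hp
    unfold term
    rw [show t^p.1 * c μ p.1 * (t^p.2 * c ρ p.2) = t^(p.1+p.2) * (c μ p.1 * c ρ p.2) by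
      rw [pow_add]; ring, h]
  rw [Finset.sum_congr rfl this, ← Finset.mul_sum, vandermonde hμ hρ hσ k]

lemma recurrence {ν t : ℝ} (hν : 1/2 ≤ ν) (ht : 0 < t) :
    ∑' k, term (ν-1) t k = ν * ∑' k, term ν t k + t * ∑' k, term (ν+1) t k := by
  have hν1 : (-1:ℝ) < ν - 1 := by linarith
  have hν0 : (-1:ℝ) < ν := by linarith
  have hν2 : (-1:ℝ) < ν + 1 := by linarith
  set S : ℕ → ℝ := fun k => Nat.casesOn k 0 (fun j => t * term (ν+1) t j) with hS
  have hSsum : Summable S := by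
    have h1 : Summable (fun j => S (j+1)) := by
      simp only [hS]
      exact ((summable_term hν2 ht).mul_left t)
    exact (summable_nat_add_iff 1).mp h1
  have heach : ∀ k, term (ν-1) t k = ν * term ν t k + S k := by
    intro k
    cases k with
    | zero =>
      simp only [hS, term, c, pow_zero, one_mul, Nat.factorial_zero, Nat.cast_zero, Nat.cast_one]
      rw [show (0:ℝ) + (ν-1) + 1 = ν by ring, show (0:ℝ) + ν + 1 = ν + 1 by ring,
          Real.Gamma_add_one (show ν ≠ 0 by linarith)]
      have hg : Real.Gamma ν ≠ 0 := ne_of_gt (Real.Gamma_pos_of_pos (by linarith))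
      have hν' : ν ≠ 0 := by linarith
      field_simp
      simp
    | succ j =>
      simp only [hS, term, c]
      have hj : (0:ℝ) ≤ j := Nat.cast_nonneg j
      have e1 : Real.Gamma (↑(j+1) + (ν-1) + 1) = Real.Gamma ((j:ℝ) + ν + 1) := by
        push_cast; ring_nf
      have e2 : Real.Gamma (↑(j+1) + ν + 1) = ((j:ℝ)+ν+1) * Real.Gamma ((j:ℝ)+ν+1) := by
        rw [show ((j+1:ℕ):ℝ) + ν + 1 = ((j:ℝ)+ν+1) + 1 by push_cast; ring,
            Real.Gamma_add_one (by linarith)]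
      have e3 : Real.Gamma ((j:ℝ) + (ν+1) + 1) = ((j:ℝ)+ν+1) * Real.Gamma ((j:ℝ)+ν+1) := by
        rw [show (j:ℝ) + (ν+1) + 1 = ((j:ℝ)+ν+1) + 1 by ring,
            Real.Gamma_add_one (by linarith)]
      rw [e1, e2, e3, Nat.factorial_succ]
      have hg : Real.Gamma ((j:ℝ)+ν+1) ≠ 0 := ne_of_gt (Real.Gamma_pos_of_pos (by linarith))
      have h2 : ((j.factorial:ℝ)) ≠ 0 := by positivity
      have h3 : ((j:ℝ)+1) ≠ 0 := by positivity
      have h4 : ((j:ℝ)+ν+1) ≠ 0 := by linarith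
      push_cast
      field_simp
      ring
  rw [tsum_congr heach, Summable.tsum_add ((summable_term hν0 ht).mul_left ν) hSsum,
      tsum_mul_left, Summable.tsum_eq_zero_add hSsum]
  simp only [hS]
  rw [tsum_mul_left]
  norm_num

lemma besselI_eq_aux {μ x : ℝ} (hx : 0 < x) :
    (∑' k : ℕ, (x / 2) ^ (2 * (k : ℝ) + μ) / ((k.factorial : ℝ) * Real.Gamma ((k : ℝ) + μ + 1)))
      = (x/2) ^ μ * ∑' k, term μ ((x/2)^2) k := by
  rw [← tsum_mul_left]
  apply tsum_congr
  intro k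
  have hx2 : (0:ℝ) < x/2 := by linarith
  have e : (x/2) ^ (2 * (k:ℝ) + μ) = ((x/2)^2)^k * (x/2)^μ := by
    rw [Real.rpow_add hx2]
    congr 1
    rw [show (2 * (k:ℝ)) = ((2*k : ℕ) : ℝ) by push_cast; ring, Real.rpow_natCast, pow_mul]
  rw [e]
  unfold term c
  field_simp

lemma key_term {ν : ℝ} (hν : 1/2 ≤ ν) (k : ℕ) :
    2*(W ν ν k - W (ν-1) (ν+1) k) ≤ W ν (ν-1) (k+1) := by
  have hk : (0:ℝ) ≤ k := Nat.cast_nonneg k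
  have gP := Real.Gamma_pos_of_pos (show (0:ℝ) < 2*ν+2*(k:ℝ)+1 by linarith)
  have gQ := Real.Gamma_pos_of_pos (show (0:ℝ) < 2*ν+(k:ℝ)+1 by linarith)
  have gA := Real.Gamma_pos_of_pos (show (0:ℝ) < (k:ℝ)+ν by linarith)
  have hf : (0:ℝ) < k.factorial := by exact_mod_cast k.factorial_pos
  have nP : Real.Gamma (2*ν+2*(k:ℝ)+1) ≠ 0 := ne_of_gt gP
  have nQ : Real.Gamma (2*ν+(k:ℝ)+1) ≠ 0 := ne_of_gt gQ
  have nA : Real.Gamma ((k:ℝ)+ν) ≠ 0 := ne_of_gt gA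
  have nf : ((k.factorial:ℝ)) ≠ 0 := ne_of_gt hf
  have nu : ((k:ℝ)+ν) ≠ 0 := by linarith
  have nu1 : ((k:ℝ)+ν+1) ≠ 0 := by linarith
  have nk1 : ((k:ℝ)+1) ≠ 0 := by positivity
  have e1 : W ν ν k - W (ν-1) (ν+1) k
      = Real.Gamma (2*ν+2*(k:ℝ)+1) /
        (Real.Gamma (2*ν+(k:ℝ)+1) * k.factorial * Real.Gamma ((k:ℝ)+ν) * Real.Gamma ((k:ℝ)+ν)
          * (((k:ℝ)+ν)*((k:ℝ)+ν)*((k:ℝ)+ν+1))) := by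
    unfold W
    rw [show ν + ν + 2*(k:ℝ) + 1 = 2*ν+2*(k:ℝ)+1 by ring,
        show ν - 1 + (ν+1) + 2*(k:ℝ) + 1 = 2*ν+2*(k:ℝ)+1 by ring,
        show ν + ν + (k:ℝ) + 1 = 2*ν+(k:ℝ)+1 by ring,
        show ν - 1 + (ν+1) + (k:ℝ) + 1 = 2*ν+(k:ℝ)+1 by ring,
        show (k:ℝ) + (ν-1) + 1 = (k:ℝ)+ν by ring,
        show (k:ℝ) + (ν+1) + 1 = (((k:ℝ)+ν) + 1) + 1 by ring,
        show (k:ℝ) + ν + 1 = ((k:ℝ)+ν) + 1 by ring,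
        Real.Gamma_add_one (show ((k:ℝ)+ν) + 1 ≠ 0 by linarith),
        Real.Gamma_add_one (show ((k:ℝ)+ν) ≠ 0 by linarith)]
    field_simp
    ring
  have e2 : W ν (ν-1) (k+1)
      = ((2*ν+2*(k:ℝ)+1) / ((k:ℝ)+1)) *
        (Real.Gamma (2*ν+2*(k:ℝ)+1) /
        (Real.Gamma (2*ν+(k:ℝ)+1) * k.factorial * Real.Gamma ((k:ℝ)+ν) * Real.Gamma ((k:ℝ)+ν)
          * (((k:ℝ)+ν)*((k:ℝ)+ν)*((k:ℝ)+ν+1)))) := by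
    unfold W
    push_cast
    rw [show ν + (ν-1) + 2*((k:ℝ)+1) + 1 = (2*ν+2*(k:ℝ)+1) + 1 by ring,
        show ν + (ν-1) + ((k:ℝ)+1) + 1 = 2*ν+(k:ℝ)+1 by ring,
        show (k:ℝ) + 1 + ν + 1 = (((k:ℝ)+ν) + 1) + 1 by ring,
        show (k:ℝ) + 1 + (ν-1) + 1 = ((k:ℝ)+ν) + 1 by ring,
        Real.Gamma_add_one (show (2*ν+2*(k:ℝ)+1) ≠ 0 by linarith),
        Real.Gamma_add_one (show ((k:ℝ)+ν) + 1 ≠ 0 by linarith),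
        Real.Gamma_add_one (show ((k:ℝ)+ν) ≠ 0 by linarith),
        Nat.factorial_succ]
    push_cast
    field_simp
  rw [e1, e2]
  have hX : (0:ℝ) < Real.Gamma (2*ν+2*(k:ℝ)+1) /
        (Real.Gamma (2*ν+(k:ℝ)+1) * k.factorial * Real.Gamma ((k:ℝ)+ν) * Real.Gamma ((k:ℝ)+ν)
          * (((k:ℝ)+ν)*((k:ℝ)+ν)*((k:ℝ)+ν+1))) := by
    apply div_pos gP
    have h1 : (0:ℝ) < (k:ℝ)+ν := by linarith
    have h2 : (0:ℝ) < (k:ℝ)+ν+1 := by linarith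
    positivity
  have h2 : (2:ℝ) ≤ (2*ν+2*(k:ℝ)+1) / ((k:ℝ)+1) := by
    rw [le_div_iff₀ (by positivity)]
    linarith
  exact mul_le_mul_of_nonneg_right h2 hX.le

lemma tsum_term_pos {μ t : ℝ} (hμ : -1 < μ) (ht : 0 < t) : 0 < ∑' k, term μ t k :=
  Summable.tsum_pos (summable_term hμ ht) (fun k => (term_pos hμ ht k).le) 0 (term_pos hμ ht 0)

lemma key_series {ν t : ℝ} (hν : 1/2 ≤ ν) (ht : 0 < t) :
    2*t*((∑' k, term ν t k) * (∑' k, term ν t k)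
        - (∑' k, term (ν-1) t k) * (∑' k, term (ν+1) t k))
      ≤ (∑' k, term ν t k) * (∑' k, term (ν-1) t k) := by
  have hν0 : (-1:ℝ) < ν := by linarith
  have hν1 : (-1:ℝ) < ν - 1 := by linarith
  have hν2 : (-1:ℝ) < ν + 1 := by linarith
  have hσ1 : (-1:ℝ) < ν + ν := by linarith
  have hσ2 : (-1:ℝ) < (ν-1) + (ν+1) := by linarith
  have hσ3 : (-1:ℝ) < ν + (ν-1) := by linarith
  rw [cauchy hν0 hν0 hσ1 ht, cauchy hν1 hν2 hσ2 ht, cauchy hν0 hν1 hσ3 ht]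
  have s1 := summable_tW hν0 hν0 hσ1 ht
  have s2 := summable_tW hν1 hν2 hσ2 ht
  have s3 := summable_tW hν0 hν1 hσ3 ht
  rw [← Summable.tsum_sub s1 s2, ← tsum_mul_left]
  set g : ℕ → ℝ := fun k => 2*t*(t^k * W ν ν k - t^k * W (ν-1) (ν+1) k) with hg
  set S : ℕ → ℝ := fun k => Nat.casesOn k 0 (fun j => g j) with hS2
  have hSsum : Summable S := by
    apply (summable_nat_add_iff 1).mp
    have : (fun j => S (j+1)) = g := by funext j; simp [hS2]
    rw [this]
    exact ((s1.sub s2).mul_left (2*t))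
  have hle : ∀ k, S k ≤ t^k * W ν (ν-1) k := by
    intro k
    cases k with
    | zero =>
      simp only [hS2]
      have := W_pos hν0 hν1 hσ3 0
      have h0 : (0:ℝ) ≤ t^0 * W ν (ν-1) 0 := by positivity
      exact h0
    | succ j =>
      have hkey := key_term hν j
      have h2 := mul_le_mul_of_nonneg_left hkey (pow_nonneg ht.le (j+1))
      calc S (j+1) = t^(j+1) * (2*(W ν ν j - W (ν-1) (ν+1) j)) := by
            simp only [hS2, hg]; ring
        _ ≤ t^(j+1) * W ν (ν-1) (j+1) := h2
  have heq : ∑' k, g k = ∑' k, S k := by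
    rw [Summable.tsum_eq_zero_add hSsum]
    simp only [hS2]
    norm_num
  rw [heq]
  exact Summable.tsum_le_tsum hle hSsum s3

end Seg




/-- Segura's bound: for `ν ≥ 1/2` and `x > 0`,
`I_ν(x)/I_{ν−1}(x) ≤ x/((ν−1/2) + √((ν−1/2)² + x²))`. -/
theorem stmt9 (ν x : ℝ) (hν : 1 / 2 ≤ ν) (hx : 0 < x) :
    besselI ν x / besselI (ν - 1) x ≤
      x / ((ν - 1 / 2) + Real.sqrt ((ν - 1 / 2) ^ 2 + x ^ 2)) := by
  have hx2 : (0:ℝ) < x/2 := by linarith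
  have ht : (0:ℝ) < (x/2)^2 := by positivity
  set t : ℝ := (x/2)^2 with htdef
  have hν0 : (-1:ℝ) < ν := by linarith
  have hν1 : (-1:ℝ) < ν - 1 := by linarith
  have hν2 : (-1:ℝ) < ν + 1 := by linarith
  set F : ℝ := ∑' k, Seg.term ν t k with hF
  set Fm : ℝ := ∑' k, Seg.term (ν-1) t k with hFm
  set Fp : ℝ := ∑' k, Seg.term (ν+1) t k with hFp
  have hFpos : 0 < F := Seg.tsum_term_pos hν0 ht
  have hFmpos : 0 < Fm := Seg.tsum_term_pos hν1 ht
  have hIv : besselI ν x = (x/2) ^ (ν:ℝ) * F := by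
    unfold besselI; rw [hF]; exact Seg.besselI_eq_aux hx
  have hIvm : besselI (ν-1) x = (x/2) ^ (ν-1:ℝ) * Fm := by
    unfold besselI; rw [hFm]; exact Seg.besselI_eq_aux hx
  have hkey := Seg.key_series hν ht
  have hrec := Seg.recurrence hν ht
  rw [← hF, ← hFm, ← hFp] at hkey hrec
  -- quadratic inequality
  have e : 2*t*(F*F - Fm*Fp) = 2*t*F^2 - 2*Fm*(t*Fp) := by ring
  have hsub : t*Fp = Fm - ν*F := by linarith [hrec]
  rw [hsub] at e
  have hquad : 2*t*F^2 + (2*ν-1)*(F*Fm) ≤ 2*Fm^2 := by nlinarith [hkey, e]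
  -- set up terms
  set s : ℝ := ν - 1/2 with hsdef
  set R : ℝ := Real.sqrt (s^2 + x^2) with hRdef
  have hs0 : (0:ℝ) ≤ s := by rw [hsdef]; linarith
  have hR2 : R^2 = s^2 + x^2 := Real.sq_sqrt (by positivity)
  have hRs : s ≤ R := by
    rw [hRdef]
    calc s = Real.sqrt (s^2) := (Real.sqrt_sq hs0).symm
      _ ≤ Real.sqrt (s^2 + x^2) := Real.sqrt_le_sqrt (by nlinarith)
  have hRx : x ≤ R := by
    rw [hRdef]
    calc x = Real.sqrt (x^2) := (Real.sqrt_sq hx.le).symm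
      _ ≤ Real.sqrt (s^2 + x^2) := Real.sqrt_le_sqrt (by nlinarith)
  have hsR : (0:ℝ) < s + R := by linarith
  set y : ℝ := (x/2) * (F/Fm) with hydef
  have hy0 : (0:ℝ) ≤ y := by
    rw [hydef]; positivity
  have hyFm : y * Fm = (x/2) * F := by
    rw [hydef]; field_simp
  have hy : x*y^2 + 2*s*y ≤ x := by
    have h2 : (x*y^2 + 2*s*y) * Fm^2 ≤ x * Fm^2 := by
      calc (x*y^2 + 2*s*y) * Fm^2 = x*(y*Fm)^2 + 2*s*(y*Fm)*Fm := by ring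
        _ = x*((x/2)*F)^2 + 2*s*((x/2)*F)*Fm := by rw [hyFm]
        _ = (x/2)*(2*t*F^2 + (2*ν-1)*(F*Fm)) := by rw [htdef, hsdef]; ring
        _ ≤ (x/2)*(2*Fm^2) := by nlinarith [hquad]
        _ = x*Fm^2 := by ring
    exact le_of_mul_le_mul_right h2 (by positivity)
  -- conclude (s+R)*y ≤ x
  have h3 : x*y ≤ R - s := by
    by_contra hcon
    push_neg at hcon
    have hRs0 : (0:ℝ) ≤ R - s := by linarith
    have h4 : (R-s)^2 < (x*y)^2 := by nlinarith
    have h5 : 2*s*(R-s) ≤ 2*s*(x*y) := by nlinarith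
    have h6 : x*(x*y^2+2*s*y) ≤ x*x := by nlinarith [hy]
    nlinarith [h4, h5, h6, hR2]
  have h7 : x*((s+R)*y) ≤ x*x := by nlinarith [mul_le_mul_of_nonneg_left h3 hsR.le, hR2]
  have h8 : (s+R)*y ≤ x := le_of_mul_le_mul_left h7 hx
  -- final conversion
  have hratio : besselI ν x / besselI (ν-1) x = y := by
    rw [hIv, hIvm, hydef]
    have hrw : (x/2:ℝ) ^ (ν:ℝ) = (x/2) * (x/2) ^ (ν-1:ℝ) := by
      have h := Real.rpow_add hx2 1 (ν-1)
      rw [Real.rpow_one] at h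
      rw [show (1:ℝ) + (ν-1) = ν by ring] at h
      exact h
    rw [hrw]
    have hne : (x/2:ℝ) ^ (ν-1:ℝ) ≠ 0 := ne_of_gt (Real.rpow_pos_of_pos hx2 _)
    field_simp
  rw [hratio, le_div_iff₀ hsR]
  linarith [h8]
end

section
/- Let R be a p × p symmetric positive definite matrix and let a ≥ p/2. Then the hypergeometric function of matrix argument satisfies ₀F₁(a, R) ≥ Γ(a) · (tr R)^{(1−a)/2} · I_{a−1}(2 √(tr R)), where I_{a−1} is the modified Bessel function of the first kind. Equivalently, ₀F₁(a, R) ≥ Σ_{k=0}^∞ (tr R)^k / (k! (a)_k) where (a)_k = Γ(a+k)/Γ(a). -/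
open Matrix

/-- Partitions of `k` into at most `p` parts: weakly decreasing `p`-tuples of naturals
summing to `k`. -/
def parts (p k : ℕ) : Finset (Fin p → ℕ) :=
  (Finset.Nat.antidiagonalTuple p k).filter fun κ => ∀ i j : Fin p, i ≤ j → κ j ≤ κ i

/-- The generalized Pochhammer symbol
`(a)_κ = Π_{j=1}^p Γ(a − (j−1)/2 + k_j)/Γ(a − (j−1)/2)`. -/
noncomputable def pochPart (a : ℝ) {p : ℕ} (κ : Fin p → ℕ) : ℝ :=
  ∏ j : Fin p, Real.Gamma (a - (j : ℕ) / 2 + κ j) / Real.Gamma (a - (j : ℕ) / 2)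

/-- Real Pochhammer symbol as a product. -/
noncomputable def poch (x : ℝ) (n : ℕ) : ℝ := ∏ i ∈ Finset.range n, (x + i)

lemma poch_pos {x : ℝ} (hx : 0 < x) (n : ℕ) : 0 < poch x n :=
  Finset.prod_pos fun i _ => by positivity

lemma Gamma_ratio {x : ℝ} (hx : 0 < x) (n : ℕ) :
    Real.Gamma (x + n) / Real.Gamma x = poch x n := by
  induction n with
  | zero => simp [poch, div_self (Real.Gamma_pos_of_pos hx).ne']
  | succ m ih =>
    have hxm : (0:ℝ) < x + m := by positivity
    have hg : Real.Gamma (x + (m+1 : ℕ)) = (x + m) * Real.Gamma (x + m) := by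
      have h2 := Real.Gamma_add_one hxm.ne'
      push_cast
      rw [show x + ((m:ℝ)+1) = x + m + 1 by ring, h2]
    have hgx := Real.Gamma_pos_of_pos hx
    rw [hg, poch, Finset.prod_range_succ, ← poch, ← ih]
    field_simp

lemma poch_le_poch {x y : ℝ} (hx : 0 < x) (hxy : x ≤ y) (n : ℕ) :
    poch x n ≤ poch y n :=
  Finset.prod_le_prod (fun i _ => by positivity) (fun i _ => by linarith)

lemma poch_add (x : ℝ) (m n : ℕ) : poch x (m + n) = poch x m * poch (x + m) n := by
  rw [poch, Finset.prod_range_add]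
  congr 1
  refine Finset.prod_congr rfl fun i _ => ?_
  push_cast; ring

lemma poch_mul_le {x : ℝ} (hx : 0 < x) (m n : ℕ) :
    poch x m * poch x n ≤ poch x (m + n) := by
  rw [poch_add]
  exact mul_le_mul_of_nonneg_left
    (poch_le_poch hx (le_add_of_nonneg_right (by positivity)) n) (poch_pos hx m).le

lemma prod_poch_le {x : ℝ} (hx : 0 < x) {ι : Type*} (s : Finset ι) (f : ι → ℕ) :
    ∏ j ∈ s, poch x (f j) ≤ poch x (∑ j ∈ s, f j) := by
  classical
  induction s using Finset.cons_induction with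
  | empty => simp [poch]
  | cons i s hi ih =>
    rw [Finset.prod_cons, Finset.sum_cons]
    calc poch x (f i) * ∏ j ∈ s, poch x (f j)
        ≤ poch x (f i) * poch x (∑ j ∈ s, f j) :=
          mul_le_mul_of_nonneg_left ih (poch_pos hx (f i)).le
      _ ≤ _ := poch_mul_le hx _ _

lemma half_pow_le_poch {x : ℝ} (hx : 1/2 ≤ x) (n : ℕ) :
    (1/2 : ℝ) ^ n ≤ poch x n := by
  calc (1/2:ℝ)^n = ∏ _i ∈ Finset.range n, (1/2:ℝ) := by simp
    _ ≤ poch x n := Finset.prod_le_prod (fun i _ => by norm_num) (fun i _ => by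
        have : (0:ℝ) ≤ i := Nat.cast_nonneg i
        linarith)

/-- For a `p×p` symmetric positive definite `R` and `a ≥ p/2`, the hypergeometric function of
matrix argument `₀F₁(a,R) = Σ_k Σ_{κ⊢k} C_κ(R)/((a)_κ k!)` (with `C_κ` the zonal polynomials,
which are nonnegative at positive definite arguments and satisfy `Σ_{κ⊢k} C_κ(R) = (tr R)^k`)
satisfies `₀F₁(a,R) ≥ Γ(a) (tr R)^{(1−a)/2} I_{a−1}(2√(tr R))`, and equivalently
`₀F₁(a,R) ≥ Σ_k (tr R)^k/(k! (a)_k)` with `(a)_k = Γ(a+k)/Γ(a)`. -/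
theorem stmt10 {p : ℕ} (hp : 0 < p) (R : Matrix (Fin p) (Fin p) ℝ)
    (hRsym : R.IsSymm) (hRpd : R.PosDef)
    (a : ℝ) (ha : (p : ℝ) / 2 ≤ a)
    (C : (k : ℕ) → (Fin p → ℕ) → ℝ)
    (hCnonneg : ∀ k, ∀ κ ∈ parts p k, 0 ≤ C k κ)
    (hCsum : ∀ k : ℕ, ∑ κ ∈ parts p k, C k κ = R.trace ^ k)
    (F : ℝ)
    (hF : F = ∑' k : ℕ, ∑ κ ∈ parts p k, C k κ / (pochPart a κ * (k.factorial : ℝ))) :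
    F ≥ Real.Gamma a * R.trace ^ ((1 - a) / 2) * besselI (a - 1) (2 * Real.sqrt R.trace) ∧
    F ≥ ∑' k : ℕ, R.trace ^ k /
        ((k.factorial : ℝ) * (Real.Gamma (a + k) / Real.Gamma a)) := by
  -- basic positivity facts
  have hpr : (1:ℝ) ≤ (p:ℝ) := by exact_mod_cast hp
  have ha2 : (1:ℝ)/2 ≤ a := by linarith
  have ha0 : 0 < a := by linarith
  set t : ℝ := R.trace with hts
  haveI : Nonempty (Fin p) := ⟨⟨0, hp⟩⟩
  have ht : 0 < t := by
    have hdiag : ∀ i : Fin p, 0 < R i i := by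
      intro i
      have hx : (Pi.single i 1 : Fin p → ℝ) ≠ 0 := by
        intro hx0
        have := congrFun hx0 i
        simp at this
      exact hRpd.diag_pos
    calc (0:ℝ) < ∑ i, R i i := Finset.sum_pos (fun i _ => hdiag i) Finset.univ_nonempty
      _ = t := rfl
  -- bounds on the partition Pochhammer symbol
  have hja : ∀ j : Fin p, 1/2 ≤ a - (j:ℕ)/2 := by
    intro j
    have : ((j:ℕ):ℝ) ≤ (p:ℝ) - 1 := by
      have := j.2
      have : ((j:ℕ):ℝ) ≤ (p:ℝ) - 1 := by
        have h1 : (j:ℕ) + 1 ≤ p := j.2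
        have : ((j:ℕ):ℝ) + 1 ≤ (p:ℝ) := by exact_mod_cast h1
        linarith
      exact this
    linarith
  have hpochPart : ∀ {k : ℕ} (κ : Fin p → ℕ), κ ∈ parts p k →
      pochPart a κ = ∏ j : Fin p, poch (a - (j:ℕ)/2) (κ j) := by
    intro k κ _
    exact Finset.prod_congr rfl fun j _ => Gamma_ratio (by have := hja j; linarith) (κ j)
  have hsumκ : ∀ {k : ℕ} (κ : Fin p → ℕ), κ ∈ parts p k → ∑ j, κ j = k := by
    intro k κ hκ
    have := (Finset.mem_filter.mp hκ).1
    exact Finset.Nat.mem_antidiagonalTuple.mp this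
  have hPlow : ∀ {k : ℕ} (κ : Fin p → ℕ), κ ∈ parts p k →
      (1/2 : ℝ)^k ≤ pochPart a κ := by
    intro k κ hκ
    rw [hpochPart κ hκ, ← hsumκ κ hκ, ← Finset.prod_pow_eq_pow_sum]
    exact Finset.prod_le_prod (fun j _ => by positivity)
      (fun j _ => half_pow_le_poch (hja j) (κ j))
  have hPhigh : ∀ {k : ℕ} (κ : Fin p → ℕ), κ ∈ parts p k →
      pochPart a κ ≤ poch a k := by
    intro k κ hκ
    rw [hpochPart κ hκ, ← hsumκ κ hκ]
    calc ∏ j : Fin p, poch (a - (j:ℕ)/2) (κ j)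
        ≤ ∏ j : Fin p, poch a (κ j) :=
          Finset.prod_le_prod (fun j _ => (poch_pos (by have := hja j; linarith) _).le)
            (fun j _ => poch_le_poch (by have := hja j; linarith)
              (by
                have hj0 : (0:ℝ) ≤ ((j:ℕ):ℝ) := Nat.cast_nonneg _
                linarith) _)
      _ ≤ _ := prod_poch_le ha0 _ _
  have hPpos : ∀ {k : ℕ} (κ : Fin p → ℕ), κ ∈ parts p k → 0 < pochPart a κ := by
    intro k κ hκ
    exact lt_of_lt_of_le (by positivity) (hPlow κ hκ)
  -- the series
  set g : ℕ → ℝ := fun k => ∑ κ ∈ parts p k, C k κ / (pochPart a κ * (k.factorial : ℝ))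
    with hg
  set h : ℕ → ℝ := fun k => t^k / ((k.factorial : ℝ) * poch a k) with hh
  have hgnonneg : ∀ k, 0 ≤ g k := fun k =>
    Finset.sum_nonneg fun κ hκ => div_nonneg (hCnonneg k κ hκ)
      (mul_nonneg (hPpos κ hκ).le (Nat.cast_nonneg _))
  have hgle : ∀ k, g k ≤ (2*t)^k / (k.factorial : ℝ) := by
    intro k
    have : g k ≤ ∑ κ ∈ parts p k, C k κ * 2^k / (k.factorial : ℝ) := by
      refine Finset.sum_le_sum fun κ hκ => ?_
      have h1 : (0:ℝ) < (1/2)^k * (k.factorial : ℝ) := by positivity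
      have h2 : (1/2:ℝ)^k * (k.factorial : ℝ) ≤ pochPart a κ * (k.factorial : ℝ) :=
        mul_le_mul_of_nonneg_right (hPlow κ hκ) (Nat.cast_nonneg _)
      calc C k κ / (pochPart a κ * (k.factorial : ℝ))
          ≤ C k κ / ((1/2:ℝ)^k * (k.factorial : ℝ)) :=
            div_le_div_of_nonneg_left (hCnonneg k κ hκ) h1 h2
        _ = C k κ * 2^k / (k.factorial : ℝ) := by
            have hk : ((k.factorial:ℝ)) ≠ 0 := by positivity
            rw [div_eq_div_iff h1.ne' hk]
            have : ((1:ℝ)/2)^k * (2:ℝ)^k = 1 := by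
              rw [← mul_pow]; norm_num
            linear_combination (-1 * C k κ * (k.factorial:ℝ)) * this
    calc g k ≤ _ := this
      _ = (2*t)^k / (k.factorial : ℝ) := by
        rw [← Finset.sum_div, ← Finset.sum_mul, hCsum k, mul_pow, mul_comm]
  have hgsummable : Summable g := by
    refine Summable.of_nonneg_of_le hgnonneg hgle ?_
    simpa using Real.summable_pow_div_factorial (2*t)
  have hhle : ∀ k, h k ≤ g k := by
    intro k
    have : ∑ κ ∈ parts p k, C k κ / (poch a k * (k.factorial : ℝ)) ≤ g k := by
      refine Finset.sum_le_sum fun κ hκ => ?_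
      exact div_le_div_of_nonneg_left (hCnonneg k κ hκ)
        (mul_pos (hPpos κ hκ) (by positivity))
        (mul_le_mul_of_nonneg_right (hPhigh κ hκ) (Nat.cast_nonneg _))
    have e1 : h k = t ^ k / ((k.factorial : ℝ) * poch a k) := rfl
    calc h k = ∑ κ ∈ parts p k, C k κ / (poch a k * (k.factorial : ℝ)) := by
          rw [← Finset.sum_div, hCsum k, e1, mul_comm ((k.factorial:ℝ)) _]
      _ ≤ g k := this
  have hhnonneg : ∀ k, 0 ≤ h k := fun k => by
    have := poch_pos ha0 k
    positivity
  have hhsummable : Summable h := Summable.of_nonneg_of_le hhnonneg hhle hgsummable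
  have key2 : F ≥ ∑' k, h k := by
    rw [hF]
    exact Summable.tsum_le_tsum hhle hhsummable hgsummable
  have hheq : ∀ k : ℕ, t ^ k / ((k.factorial : ℝ) * (Real.Gamma (a + k) / Real.Gamma a))
      = h k := by
    intro k
    rw [Gamma_ratio ha0 k]
  constructor
  · -- Bessel form equals ∑' h
    have hbessel : Real.Gamma a * t ^ ((1 - a) / 2) * besselI (a - 1) (2 * Real.sqrt t)
        = ∑' k, h k := by
      rw [besselI, ← tsum_mul_left]
      refine tsum_congr fun k => ?_
      have h1 : 2 * Real.sqrt t / 2 = Real.sqrt t := by ring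
      rw [h1, Real.sqrt_eq_rpow, ← Real.rpow_mul ht.le]
      have h2 : (1/2 : ℝ) * (2 * (k:ℝ) + (a - 1)) = (k:ℝ) + (a-1)/2 := by ring
      rw [h2, Real.rpow_add ht, Real.rpow_natCast t k]
      have h3 : (k:ℝ) + (a - 1) + 1 = a + k := by ring
      rw [h3]
      have hgam : 0 < Real.Gamma (a + k) := Real.Gamma_pos_of_pos (by positivity)
      have hgam0 : 0 < Real.Gamma a := Real.Gamma_pos_of_pos ha0
      have h4 : t ^ ((1-a)/2 : ℝ) * t ^ ((a-1)/2 : ℝ) = 1 := by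
        rw [← Real.rpow_add ht, show (1-a)/2 + (a-1)/2 = 0 by ring, Real.rpow_zero]
      have e1 : h k = t ^ k / ((k.factorial : ℝ) * poch a k) := rfl
      rw [e1, ← Gamma_ratio ha0 k]
      have e2 : Real.Gamma a * t ^ ((1 - a)/2 : ℝ) *
          (t ^ k * t ^ ((a-1)/2 : ℝ) / ((k.factorial:ℝ) * Real.Gamma (a + k)))
          = Real.Gamma a * (t ^ ((1 - a)/2 : ℝ) * t ^ ((a-1)/2 : ℝ)) *
            (t ^ k / ((k.factorial:ℝ) * Real.Gamma (a + k))) := by ring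
      rw [e2, h4, mul_one]
      have hfac : ((k.factorial:ℝ)) ≠ 0 := by positivity
      field_simp
    rw [hbessel]
    exact key2
  · calc F ≥ ∑' k, h k := key2
      _ = _ := (tsum_congr hheq).symm
end

section
/- Let f : ℝ₊ → ℝ₊ be a continuous, log-concave, integrable function with a finite maximizer m (f nondecreasing on (0,m], nonincreasing on [m,∞)). Suppose B > m satisfies f(B)/f(m) < ε for some ε ∈ (0,1). Then ∫_B^∞ f(x) dx / ∫_0^∞ f(x) dx < ε. -/
open MeasureTheory Set

/-- Tail bound for a continuous, integrable, log-concave unimodal function on `(0,∞)`: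
if `f` is positive on `(0,∞)`, nondecreasing on `(0,m]`, nonincreasing on `[m,∞)`, and
`B > m` satisfies `f(B)/f(m) < ε` with `ε ∈ (0,1)`, then
`∫_B^∞ f / ∫_0^∞ f < ε`. -/
theorem stmt17 (f : ℝ → ℝ) (hcont : ContinuousOn f (Ioi (0 : ℝ)))
    (hpos : ∀ x ∈ Ioi (0 : ℝ), 0 < f x)
    (hconc : ConcaveOn ℝ (Ioi (0 : ℝ)) fun x => Real.log (f x))
    (hint : IntegrableOn f (Ioi (0 : ℝ)))
    (m : ℝ) (hm : 0 < m)
    (hmono : MonotoneOn f (Ioc (0 : ℝ) m)) (hanti : AntitoneOn f (Ici m))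
    (B ε : ℝ) (hB : m < B) (hε : ε ∈ Set.Ioo (0 : ℝ) 1)
    (hratio : f B / f m < ε) :
    (∫ x in Ioi B, f x) / (∫ x in Ioi (0 : ℝ), f x) < ε := by
  obtain ⟨hε0, hε1⟩ := hε
  have hfm : 0 < f m := hpos m hm
  have hfB : 0 < f B := hpos B (hm.trans hB)
  set r := f B / f m with hr
  have hr0 : 0 < r := div_pos hfB hfm
  -- pointwise bound on the tail
  have key : ∀ x ∈ Ioi B, f x ≤ r * f (x - (B - m)) := by
    intro x hx
    have hxB : B < x := hx
    have hxm : m < x := hB.trans hxB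
    have hx0 : 0 < x := hm.trans hxm
    have hy0 : 0 < x - (B - m) := by linarith
    have hfx : 0 < f x := hpos x hx0
    have hfy : 0 < f (x - (B - m)) := hpos _ hy0
    have hxm' : 0 < x - m := by linarith
    set lam := (x - B) / (x - m) with hlamdef
    set mu := (B - m) / (x - m) with hmudef
    have hlam : 0 ≤ lam := div_nonneg (by linarith) hxm'.le
    have hmu : 0 ≤ mu := div_nonneg (by linarith) hxm'.le
    have hsum : lam + mu = 1 := by
      rw [hlamdef, hmudef, ← add_div, div_eq_one_iff_eq hxm'.ne']
      ring
    have h1 := hconc.2 (mem_Ioi.2 hm) (mem_Ioi.2 hx0) hlam hmu hsum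
    have h2 := hconc.2 (mem_Ioi.2 hm) (mem_Ioi.2 hx0) hmu hlam (by linarith)
    have e1 : lam • m + mu • x = B := by
      simp only [smul_eq_mul, hlamdef, hmudef]
      field_simp
      ring
    have e2 : mu • m + lam • x = x - (B - m) := by
      simp only [smul_eq_mul, hlamdef, hmudef]
      field_simp
      ring
    rw [e1] at h1
    rw [e2] at h2
    simp only [smul_eq_mul] at h1 h2
    have hmu1 : mu = 1 - lam := by linarith
    rw [hmu1] at h1 h2
    have hlog : Real.log (f m) + Real.log (f x)
        ≤ Real.log (f B) + Real.log (f (x - (B - m))) := by nlinarith [h1, h2]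
    have hmul : f m * f x ≤ f B * f (x - (B - m)) := by
      have h := Real.exp_le_exp.2 hlog
      rwa [Real.exp_add, Real.exp_add, Real.exp_log hfm, Real.exp_log hfx,
        Real.exp_log hfB, Real.exp_log hfy] at h
    rw [hr, div_mul_eq_mul_div, le_div_iff₀ hfm]
    nlinarith [hmul]
  -- integrability facts
  have hintB : IntegrableOn f (Ioi B) := hint.mono_set (Ioi_subset_Ioi (hm.trans hB).le)
  have hintm : IntegrableOn f (Ioi m) := hint.mono_set (Ioi_subset_Ioi hm.le)
  have hmeq : ∀ x, (Ioi B).indicator (fun y => f (y - (B - m))) x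
      = (Ioi m).indicator f (x - (B - m)) := by
    intro x
    by_cases h : x ∈ Ioi B
    · rw [indicator_of_mem h, indicator_of_mem]
      simp only [mem_Ioi] at h ⊢
      linarith
    · rw [indicator_of_notMem h, indicator_of_notMem]
      simp only [mem_Ioi, not_lt] at h ⊢
      linarith
  have hint_tr : IntegrableOn (fun x => f (x - (B - m))) (Ioi B) := by
    have h : Integrable (fun x => (Ioi m).indicator f (x - (B - m))) :=
      ((integrable_indicator_iff measurableSet_Ioi).2 hintm).comp_sub_right (B - m)
    exact (integrable_indicator_iff measurableSet_Ioi).1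
      (h.congr (Filter.Eventually.of_forall fun x => (hmeq x).symm))
  have h_tr_eq : (∫ x in Ioi B, f (x - (B - m))) = ∫ x in Ioi m, f x := by
    rw [← integral_indicator measurableSet_Ioi, ← integral_indicator measurableSet_Ioi]
    calc (∫ x, (Ioi B).indicator (fun y => f (y - (B - m))) x)
        = ∫ x, (Ioi m).indicator f (x - (B - m)) := by
          exact integral_congr_ae (Filter.Eventually.of_forall hmeq)
      _ = ∫ x, (Ioi m).indicator f x := integral_sub_right_eq_self ((Ioi m).indicator f) (B - m)
  have h1 : (∫ x in Ioi B, f x) ≤ r * ∫ x in Ioi m, f x := by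
    calc (∫ x in Ioi B, f x) ≤ ∫ x in Ioi B, r * f (x - (B - m)) :=
          setIntegral_mono_on hintB (hint_tr.const_mul r) measurableSet_Ioi key
      _ = r * ∫ x in Ioi B, f (x - (B - m)) := integral_const_mul r _
      _ = r * ∫ x in Ioi m, f x := by rw [h_tr_eq]
  have h2 : (∫ x in Ioi m, f x) ≤ ∫ x in Ioi (0 : ℝ), f x := by
    apply setIntegral_mono_set hint
    · filter_upwards [ae_restrict_mem measurableSet_Ioi] with x hx using (hpos x hx).le
    · exact HasSubset.Subset.eventuallyLE (Ioi_subset_Ioi hm.le)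
  have hpos0 : 0 < ∫ x in Ioi (0 : ℝ), f x := by
    have hnn : 0 ≤ᵐ[volume.restrict (Ioi (0 : ℝ))] f := by
      filter_upwards [ae_restrict_mem measurableSet_Ioi] with x hx using (hpos x hx).le
    rw [setIntegral_pos_iff_support_of_nonneg_ae hnn hint]
    have hsub : Ioi (0 : ℝ) ⊆ Function.support f ∩ Ioi 0 :=
      fun x hx => ⟨(hpos x hx).ne', hx⟩
    refine lt_of_lt_of_le ?_ (measure_mono hsub)
    simp [Real.volume_Ioi]
  rw [div_lt_iff₀ hpos0]
  calc (∫ x in Ioi B, f x) ≤ r * ∫ x in Ioi m, f x := h1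
    _ ≤ r * ∫ x in Ioi (0 : ℝ), f x := mul_le_mul_of_nonneg_left h2 hr0.le
    _ < ε * ∫ x in Ioi (0 : ℝ), f x := mul_lt_mul_of_pos_right hratio hpos0
end
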